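/- arXiv:1303.6882 — 7 statements merged into one kernel-verified Lean document; each statement's English description precedes it below -/
import Mathlib

section
/- For α ∈ (0,1) and λ > α - 1, the integral ∫₀¹ (1 - (1-x)^λ) x^(α-2) (1-x)^(-α) dx equals λ · Γ(α) Γ(λ+1-α) / ((1-α) Γ(λ+1)). -/
open Real MeasureTheory Set Filter

lemma betaInt {p q : ℝ} (hp : -1 < p) (hq : -1 < q) :
    IntervalIntegrable (fun x : ℝ => x ^ p * (1 - x) ^ q) volume 0 1 := by
  apply IntervalIntegrable.trans (b := 1/2)
  · apply (intervalIntegral.intervalIntegrable_rpow' hp).mul_continuousOn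
    apply ContinuousOn.rpow_const (by fun_prop)
    intro x hx
    rw [Set.uIcc_of_le (by norm_num : (0:ℝ) ≤ 1/2)] at hx
    left; intro h; linarith [hx.2]
  · have h1 : IntervalIntegrable (fun x : ℝ => (1 - x) ^ q) volume (1/2) 1 := by
      have := (intervalIntegral.intervalIntegrable_rpow' (a := 0) (b := 1/2) hq).comp_sub_left 1
      norm_num at this
      exact this.symm
    apply h1.continuousOn_mul
    apply ContinuousOn.rpow_const (by fun_prop)
    intro x hx
    rw [Set.uIcc_of_le (by norm_num : (1:ℝ)/2 ≤ 1)] at hx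
    left; intro h; rw [h] at hx; linarith [hx.1]

lemma betaVal {p q : ℝ} (hp : 0 < p) (hq : 0 < q) :
    ∫ x in (0:ℝ)..1, x ^ (p - 1) * (1 - x) ^ (q - 1)
      = Real.Gamma p * Real.Gamma q / Real.Gamma (p + q) := by
  have key : Complex.betaIntegral p q
      = ((∫ x in (0:ℝ)..1, x ^ (p - 1) * (1 - x) ^ (q - 1) : ℝ) : ℂ) := by
    rw [Complex.betaIntegral, ← intervalIntegral.integral_ofReal]
    apply intervalIntegral.integral_congr
    intro x hx
    rw [Set.uIcc_of_le (by norm_num : (0:ℝ) ≤ 1)] at hx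
    push_cast
    rw [Complex.ofReal_cpow hx.1 (p-1), Complex.ofReal_cpow (by linarith [hx.2] : (0:ℝ) ≤ 1 - x) (q-1)]
    push_cast
    ring
  have h := Complex.Gamma_mul_Gamma_eq_betaIntegral (s := (p:ℂ)) (t := (q:ℂ))
    (by simpa using hp) (by simpa using hq)
  rw [key, ← Complex.ofReal_add, Complex.Gamma_ofReal, Complex.Gamma_ofReal,
    Complex.Gamma_ofReal, ← Complex.ofReal_mul, ← Complex.ofReal_mul] at h
  have h' : Real.Gamma p * Real.Gamma q
      = Real.Gamma (p + q) * ∫ x in (0:ℝ)..1, x ^ (p - 1) * (1 - x) ^ (q - 1) :=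
    Complex.ofReal_inj.mp h
  have hG : 0 < Real.Gamma (p + q) := Real.Gamma_pos_of_pos (by linarith)
  field_simp
  linarith [h']

theorem stmt_0 (α lam : ℝ) (hα : α ∈ Set.Ioo (0:ℝ) 1) (hlam : lam > α - 1) :
    ∫ x in (0:ℝ)..1, (1 - (1 - x) ^ lam) * x ^ (α - 2) * (1 - x) ^ (-α)
      = lam * Real.Gamma α * Real.Gamma (lam + 1 - α)
        / ((1 - α) * Real.Gamma (lam + 1)) := by
  obtain ⟨hα0, hα1⟩ := hα
  have h1α : (0:ℝ) < 1 - α := by linarith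
  set f : ℝ → ℝ := fun x => (1 - (1 - x) ^ lam) * x ^ (α - 2) * (1 - x) ^ (-α) with hf
  set β : ℝ → ℝ := fun x => x ^ (α - 1) * (1 - x) ^ (lam - α) with hβ
  set c : ℝ := lam / (1 - α) with hc
  set H : ℝ → ℝ :=
    fun x => -(1/(1-α)) * ((1 - (1 - x) ^ lam) * x ^ (α - 1) * (1 - x) ^ (1 - α)) with hH
  have hβint : IntervalIntegrable β volume 0 1 := betaInt (by linarith) (by linarith)
  have hfint : IntervalIntegrable f volume 0 1 := by
    rw [intervalIntegrable_iff_integrableOn_Ioo_of_le zero_le_one]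
    set C : ℝ := max 1 lam with hC
    have hC1 : (1:ℝ) ≤ C := le_max_left _ _
    apply Integrable.mono'
      (g := fun x => C * (x ^ (α-1) * (1-x) ^ (-α)) + x ^ (α-1) * (1-x) ^ (lam - α))
    · have i1 : IntervalIntegrable (fun x : ℝ => x ^ (α-1) * (1-x) ^ (-α)) volume 0 1 :=
        betaInt (by linarith) (by linarith)
      have h2 := ((i1.const_mul C).add hβint)
      rw [intervalIntegrable_iff_integrableOn_Ioo_of_le zero_le_one] at h2
      exact h2
    · apply ContinuousOn.aestronglyMeasurable _ measurableSet_Ioo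
      apply ContinuousOn.mul
      apply ContinuousOn.mul
      · apply ContinuousOn.sub continuousOn_const
        apply ContinuousOn.rpow_const (by fun_prop)
        intro x hx; left; intro h; simp only [mem_Ioo] at hx; linarith
      · apply ContinuousOn.rpow_const (by fun_prop)
        intro x hx; left; exact ne_of_gt hx.1
      · apply ContinuousOn.rpow_const (by fun_prop)
        intro x hx; left; intro h; simp only [mem_Ioo] at hx; linarith
    · rw [ae_restrict_iff' measurableSet_Ioo]
      filter_upwards with x hx
      obtain ⟨hx0, hx1⟩ := hx
      have h1x : (0:ℝ) < 1 - x := by linarith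
      have hA : (0:ℝ) ≤ x ^ (α - 2) := rpow_nonneg hx0.le _
      have hB : (0:ℝ) ≤ (1-x) ^ (-α) := rpow_nonneg h1x.le _
      have hL : (0:ℝ) ≤ (1-x) ^ lam := rpow_nonneg h1x.le _
      have key1 : 1 - (1-x) ^ lam ≤ C * x := by
        rcases le_or_gt lam 1 with h | h
        · have h2 : (1-x) ^ (1:ℝ) ≤ (1-x) ^ lam :=
            rpow_le_rpow_of_exponent_ge h1x (by linarith) h
          rw [rpow_one] at h2
          have hx' : x ≤ C * x := le_mul_of_one_le_left hx0.le hC1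
          linarith
        · have h2 := one_add_mul_self_le_rpow_one_add (by linarith : (-1:ℝ) ≤ -x) h.le
          have hCx : lam * x ≤ C * x :=
            mul_le_mul_of_nonneg_right (le_max_right _ _) hx0.le
          rw [show (1:ℝ) + -x = 1 - x by ring] at h2
          nlinarith
      have key2 : (1-x) ^ lam - 1 ≤ x * (1-x) ^ lam := by
        have h1 : (1-x) ^ (lam + 1) ≤ 1 :=
          rpow_le_one h1x.le (by linarith) (by linarith)
        rw [rpow_add_one (ne_of_gt h1x)] at h1
        nlinarith
      have habs : |1 - (1-x) ^ lam| ≤ C * x + x * (1-x) ^ lam := by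
        rw [abs_le]
        constructor
        · have : (0:ℝ) ≤ C * x := by positivity
          linarith
        · have : (0:ℝ) ≤ x * (1-x) ^ lam := by positivity
          linarith
      have hnorm : ‖f x‖ = |1 - (1-x) ^ lam| * (x ^ (α-2) * (1-x) ^ (-α)) := by
        simp only [hf, Real.norm_eq_abs, abs_mul, abs_of_nonneg hA, abs_of_nonneg hB]
        ring
      rw [hnorm]
      have hmul : |1 - (1-x) ^ lam| * (x ^ (α-2) * (1-x) ^ (-α))
          ≤ (C * x + x * (1-x) ^ lam) * (x ^ (α-2) * (1-x) ^ (-α)) :=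
        mul_le_mul_of_nonneg_right habs (by positivity)
      refine hmul.trans (le_of_eq ?_)
      have e1 : x ^ (α - 1) = x ^ (α-2) * x := by
        rw [show α - 1 = (α - 2) + 1 by ring, rpow_add_one (ne_of_gt hx0)]
      have e2 : (1-x) ^ (lam - α) = (1-x) ^ lam * (1-x) ^ (-α) := by
        rw [← rpow_add h1x]; ring_nf
      rw [e1, e2]
      ring
  have hderiv : ∀ x ∈ Ioo (0:ℝ) 1, HasDerivAt H (f x - c * β x) x := by
    intro x hx
    obtain ⟨hx0, hx1⟩ := hx
    have h1x : (0:ℝ) < 1 - x := by linarith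
    have d0 : HasDerivAt (fun y : ℝ => 1 - y) (-1) x := by
      simpa using (hasDerivAt_id x).const_sub 1
    have d1 : HasDerivAt (fun y : ℝ => 1 - (1 - y) ^ lam)
        (lam * (1-x) ^ (lam - 1)) x := by
      have h2 := (d0.rpow_const (p := lam) (Or.inl (ne_of_gt h1x))).const_sub 1
      exact h2.congr_deriv (by ring)
    have d2 : HasDerivAt (fun y : ℝ => y ^ (α - 1)) ((α-1) * x ^ (α - 2)) x := by
      have h2 := Real.hasDerivAt_rpow_const (x := x) (p := α - 1) (Or.inl (ne_of_gt hx0))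
      rw [show α - 1 - 1 = α - 2 by ring] at h2
      exact h2
    have d3 : HasDerivAt (fun y : ℝ => (1 - y) ^ (1 - α))
        (-((1-α) * (1-x) ^ (-α))) x := by
      have h2 := d0.rpow_const (p := 1 - α) (Or.inl (ne_of_gt h1x))
      rw [show (1:ℝ) - α - 1 = -α by ring] at h2
      convert h2 using 1; ring
    have dH := (((d1.mul d2).mul d3).const_mul (-(1/(1-α))))
    refine dH.congr_deriv (Eq.symm ?_)
    have e1 : x ^ (α - 1) = x ^ (α-2) * x := by
      rw [show α - 1 = (α - 2) + 1 by ring, rpow_add_one (ne_of_gt hx0)]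
    have e2 : (1-x) ^ (1 - α) = (1-x) ^ (-α) * (1-x) := by
      rw [show (1:ℝ) - α = -α + 1 by ring, rpow_add_one (ne_of_gt h1x)]
    have e3 : (1-x) ^ lam = (1-x) ^ (lam - 1) * (1-x) := by
      nth_rewrite 1 [show lam = (lam - 1) + 1 by ring]
      rw [rpow_add_one (ne_of_gt h1x)]
    have e4 : (1-x) ^ (lam - α) = (1-x) ^ (lam - 1) * ((1-x) ^ (-α) * (1-x)) := by
      rw [← e2, ← rpow_add h1x]; ring_nf
    simp only [hf, hβ, hc, Pi.mul_apply]
    rw [e1, e2, e3, e4]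
    field_simp
    ring
  have hH0 : Tendsto H (nhdsWithin 0 (Ioi 0)) (nhds 0) := by
    have hd : HasDerivAt (fun y : ℝ => 1 - (1 - y) ^ lam) lam 0 := by
      have d0 : HasDerivAt (fun y : ℝ => 1 - y) (-1) (0:ℝ) := by
        simpa using (hasDerivAt_id (0:ℝ)).const_sub 1
      have h2 := (d0.rpow_const (p := lam) (Or.inl (by norm_num : (1:ℝ) - 0 ≠ 0))).const_sub 1
      exact h2.congr_deriv (by norm_num)
    have hslope : Tendsto (fun x : ℝ => (1 - (1 - x) ^ lam) / x)
        (nhdsWithin 0 (Ioi 0)) (nhds lam) := by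
      have h2 := hasDerivAt_iff_tendsto_slope.mp hd
      have h3 := h2.mono_left (nhdsWithin_mono 0
        (fun x hx => Set.mem_compl_singleton_iff.mpr (ne_of_gt hx) : Ioi (0:ℝ) ⊆ {(0:ℝ)}ᶜ))
      apply h3.congr
      intro x
      simp [slope_def_field, Real.one_rpow]
    have hpow : Tendsto (fun x : ℝ => x ^ α) (nhdsWithin 0 (Ioi 0)) (nhds 0) := by
      have h2 := (Real.continuousAt_rpow_const 0 α (Or.inr hα0.le)).tendsto
      rw [Real.zero_rpow (ne_of_gt hα0)] at h2
      exact h2.mono_left nhdsWithin_le_nhds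
    have hone : Tendsto (fun x : ℝ => (1 - x) ^ (1 - α)) (nhdsWithin 0 (Ioi 0)) (nhds 1) := by
      have hcont : ContinuousAt (fun x : ℝ => (1 - x) ^ (1 - α)) 0 := by
        apply ContinuousAt.rpow_const (by fun_prop)
        left; norm_num
      have h2 := hcont.tendsto
      norm_num at h2
      exact h2.mono_left nhdsWithin_le_nhds
    have hprod := (((hslope.mul hpow).mul hone).const_mul (-(1/(1-α))))
    have hfin : Tendsto H (nhdsWithin 0 (Ioi 0)) (nhds (-(1/(1-α)) * ((lam * 0) * 1))) := by
      apply hprod.congr'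
      filter_upwards [self_mem_nhdsWithin] with x hx
      have hx0 : (0:ℝ) < x := hx
      simp only [hH]
      have e : x ^ (α - 1) = x ^ α / x := by
        rw [show α - 1 = α + (-1) by ring, rpow_add hx0, rpow_neg_one]
        ring
      rw [e]
      field_simp
    simpa using hfin
  have hH1 : Tendsto H (nhdsWithin 1 (Iio 1)) (nhds 0) := by
    have hbase : Tendsto (fun x : ℝ => 1 - x) (nhdsWithin 1 (Iio 1)) (nhdsWithin 0 (Ioi 0)) := by
      apply tendsto_nhdsWithin_of_tendsto_nhds_of_eventually_within
      · have hcont : Continuous (fun x : ℝ => 1 - x) := by fun_prop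
        have h2 := hcont.tendsto 1
        norm_num at h2
        exact h2.mono_left nhdsWithin_le_nhds
      · filter_upwards [self_mem_nhdsWithin] with x hx
        simp only [mem_Iio] at hx
        simp only [mem_Ioi]
        linarith
    have t1 : Tendsto (fun x : ℝ => (1 - x) ^ (1 - α)) (nhdsWithin 1 (Iio 1)) (nhds 0) := by
      have h : Tendsto (fun t : ℝ => t ^ (1 - α)) (nhdsWithin 0 (Ioi 0)) (nhds 0) := by
        have h2 := (Real.continuousAt_rpow_const 0 (1-α) (Or.inr h1α.le)).tendsto
        rw [Real.zero_rpow (ne_of_gt h1α)] at h2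
        exact h2.mono_left nhdsWithin_le_nhds
      exact h.comp hbase
    have t2 : Tendsto (fun x : ℝ => (1 - x) ^ (lam + 1 - α)) (nhdsWithin 1 (Iio 1)) (nhds 0) := by
      have h : Tendsto (fun t : ℝ => t ^ (lam + 1 - α)) (nhdsWithin 0 (Ioi 0)) (nhds 0) := by
        have h2 := (Real.continuousAt_rpow_const 0 (lam + 1 - α) (Or.inr (by linarith))).tendsto
        rw [Real.zero_rpow (by intro h3; linarith)] at h2
        exact h2.mono_left nhdsWithin_le_nhds
      exact h.comp hbase
    have t3 : Tendsto (fun x : ℝ => x ^ (α - 1)) (nhdsWithin 1 (Iio 1)) (nhds 1) := by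
      have hcont : ContinuousAt (fun x : ℝ => x ^ (α - 1)) 1 :=
        Real.continuousAt_rpow_const 1 (α - 1) (Or.inl one_ne_zero)
      have h2 := hcont.tendsto
      rw [Real.one_rpow] at h2
      exact h2.mono_left nhdsWithin_le_nhds
    have hprod := ((t3.mul (t1.sub t2)).const_mul (-(1/(1-α))))
    have hfin : Tendsto H (nhdsWithin 1 (Iio 1)) (nhds (-(1/(1-α)) * (1 * (0 - 0)))) := by
      apply hprod.congr'
      filter_upwards [Ioo_mem_nhdsLT_of_mem
        (by norm_num : (1:ℝ) ∈ Ioc (0:ℝ) 1)] with x hx'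
      obtain ⟨hx0, hx1⟩ := hx'
      have h1x : (0:ℝ) < 1 - x := by linarith
      simp only [hH]
      have e : (1 - x) ^ (lam + 1 - α) = (1 - x) ^ lam * (1 - x) ^ (1 - α) := by
        rw [← rpow_add h1x]; ring_nf
      rw [e]
      ring
    simpa using hfin
  have hφint : IntervalIntegrable (fun x => f x - c * β x) volume 0 1 :=
    hfint.sub (hβint.const_mul c)
  have hzero : ∫ x in (0:ℝ)..1, (f x - c * β x) = 0 - 0 :=
    intervalIntegral.integral_eq_sub_of_hasDerivAt_of_tendsto one_pos hderiv hφint hH0 hH1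
  have hβval : ∫ x in (0:ℝ)..1, β x
      = Real.Gamma α * Real.Gamma (lam + 1 - α) / Real.Gamma (lam + 1) := by
    have h2 := betaVal hα0 (q := lam + 1 - α) (by linarith)
    rw [show α + (lam + 1 - α) = lam + 1 by ring] at h2
    rw [← h2]
    apply intervalIntegral.integral_congr
    intro x hx
    simp only [hβ]
    rw [show lam + 1 - α - 1 = lam - α by ring]
  have hsplit : ∫ x in (0:ℝ)..1, f x
      = (∫ x in (0:ℝ)..1, (f x - c * β x)) + c * ∫ x in (0:ℝ)..1, β x := by
    rw [← intervalIntegral.integral_const_mul,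
      ← intervalIntegral.integral_add hφint (hβint.const_mul c)]
    apply intervalIntegral.integral_congr
    intro x hx
    ring
  have hG : Real.Gamma (lam + 1) ≠ 0 := (Real.Gamma_pos_of_pos (by linarith)).ne'
  calc ∫ x in (0:ℝ)..1, f x
      = (∫ x in (0:ℝ)..1, (f x - c * β x)) + c * ∫ x in (0:ℝ)..1, β x := hsplit
    _ = (0 - 0) + c * (Real.Gamma α * Real.Gamma (lam + 1 - α) / Real.Gamma (lam + 1)) := by
        rw [hzero, hβval]
    _ = lam * Real.Gamma α * Real.Gamma (lam + 1 - α) / ((1 - α) * Real.Gamma (lam + 1)) := by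
        rw [hc]
        field_simp
        ring
end

section
/- For α ∈ (0,1) and an integer n ≥ 2, one has ∫₀¹ (1 - (1-u)^n - n·u·(1-u)^(n-1)) u^(α-2) (1-u)^(-α) du = (n-1) · (α/(1-α)) · Γ(α) Γ(n-α) / Γ(n). -/
open Real
open MeasureTheory intervalIntegral


lemma beta_integrable (a b : ℝ) (ha : 0 < a) (hb : 0 < b) :
    IntervalIntegrable (fun u : ℝ => u ^ (a-1) * (1-u) ^ (b-1)) volume 0 1 := by
  have h := Complex.betaIntegral_convergent (u := (a:ℂ)) (v := (b:ℂ)) (by simpa using ha) (by simpa using hb)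
  have h2 := h.norm
  apply h2.congr
  rw [Set.uIoc_of_le (by norm_num : (0:ℝ) ≤ 1)]
  refine fun x hx => ?_
  obtain ⟨hx0, hx1⟩ := hx
  have h1x : (0:ℝ) ≤ 1 - x := by linarith
  show ‖_ * _‖ = _
  rw [show ((1:ℂ) - x) = ((1-x:ℝ):ℂ) by push_cast; ring,
    show ((b:ℂ) - 1) = ((b-1:ℝ):ℂ) by push_cast; ring,
    show ((a:ℂ) - 1) = ((a-1:ℝ):ℂ) by push_cast; ring,
    ← Complex.ofReal_cpow hx0.le, ← Complex.ofReal_cpow h1x, norm_mul]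
  simp [Complex.norm_real, abs_of_nonneg (Real.rpow_nonneg hx0.le _),
    abs_of_nonneg (Real.rpow_nonneg h1x _)]

lemma beta_eval (a b : ℝ) (ha : 0 < a) (hb : 0 < b) :
    ∫ u in (0:ℝ)..1, u ^ (a-1) * (1-u) ^ (b-1)
      = Real.Gamma a * Real.Gamma b / Real.Gamma (a+b) := by
  have key := Complex.Gamma_mul_Gamma_eq_betaIntegral (s := (a:ℂ)) (t := (b:ℂ))
    (by simpa using ha) (by simpa using hb)
  have hcast : Complex.betaIntegral a b
      = ((∫ u in (0:ℝ)..1, u ^ (a-1) * (1-u) ^ (b-1) : ℝ) : ℂ) := by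
    rw [Complex.betaIntegral, ← intervalIntegral.integral_ofReal]
    refine intervalIntegral.integral_congr fun x hx => ?_
    rw [Set.uIcc_of_le (by norm_num : (0:ℝ) ≤ 1)] at hx
    obtain ⟨hx0, hx1⟩ := hx
    have h1x : (0:ℝ) ≤ 1 - x := by linarith
    push_cast
    rw [Complex.ofReal_cpow hx0, Complex.ofReal_cpow h1x]
    push_cast
    ring
  rw [hcast, ← Complex.ofReal_add, Complex.Gamma_ofReal, Complex.Gamma_ofReal,
    Complex.Gamma_ofReal, ← Complex.ofReal_mul, ← Complex.ofReal_mul] at key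
  have key' := Complex.ofReal_injective key
  have hG : Real.Gamma (a + b) ≠ 0 := (Real.Gamma_pos_of_pos (by linarith)).ne'
  field_simp
  linarith [key']

lemma poly (k : ℕ) (x : ℝ) :
    1 - x^(k+2) - ((k:ℝ)+2)*(1-x)*x^(k+1)
      = (1-x)^2 * ∑ m ∈ Finset.range (k+1), ((m:ℝ)+1)*x^m := by
  induction k with
  | zero => norm_num; ring
  | succ k ih =>
    rw [Finset.sum_range_succ]
    push_cast
    push_cast at ih
    linear_combination ih

lemma sumGamma (α : ℝ) (hα : α ∈ Set.Ioo (0:ℝ) 1) (k : ℕ) :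
    ∑ m ∈ Finset.range (k+1),
        ((m:ℝ)+1) * (Real.Gamma (α+1) * Real.Gamma ((m:ℝ)+1-α) / Real.Gamma ((m:ℝ)+2))
      = ((k:ℝ)+1) * (α/(1-α)) * Real.Gamma α * Real.Gamma ((k:ℝ)+2-α)
        / Real.Gamma ((k:ℝ)+2) := by
  obtain ⟨h0, h1⟩ := hα
  have hne : (1:ℝ) - α ≠ 0 := by linarith
  induction k with
  | zero =>
    have g1 : Real.Gamma (α+1) = α * Real.Gamma α := Real.Gamma_add_one h0.ne'
    have g2 : Real.Gamma ((0:ℝ)+2-α) = (1-α) * Real.Gamma (1-α) := by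
      rw [show (0:ℝ)+2-α = (1-α)+1 by ring, Real.Gamma_add_one hne]
    norm_num [g1, Real.Gamma_two]
    rw [show (2:ℝ)-α = (1-α)+1 by ring, Real.Gamma_add_one hne]
    field_simp
  | succ k ih =>
    rw [Finset.sum_range_succ, ih]
    have hk2 : (0:ℝ) < (k:ℝ)+2 := by positivity
    have g1 : Real.Gamma (α+1) = α * Real.Gamma α := Real.Gamma_add_one h0.ne'
    have g2 : Real.Gamma (((k:ℕ)+1:ℕ):ℝ) = Real.Gamma ((k:ℝ)+1) := by push_cast; ring_nf
    have g3 : Real.Gamma ((k:ℝ)+1+2-α) = ((k:ℝ)+2-α) * Real.Gamma ((k:ℝ)+2-α) := by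
      rw [show (k:ℝ)+1+2-α = ((k:ℝ)+2-α)+1 by ring, Real.Gamma_add_one (by nlinarith)]
    have g4 : Real.Gamma ((k:ℝ)+1+2) = ((k:ℝ)+2) * Real.Gamma ((k:ℝ)+2) := by
      rw [show (k:ℝ)+1+2 = ((k:ℝ)+2)+1 by ring, Real.Gamma_add_one (by positivity)]
    have hGk : Real.Gamma ((k:ℝ)+2) ≠ 0 := (Real.Gamma_pos_of_pos hk2).ne'
    push_cast
    rw [g3, g4, g1]
    field_simp
    ring

theorem stmt_3 (α : ℝ) (hα : α ∈ Set.Ioo (0:ℝ) 1) (n : ℕ) (hn : 2 ≤ n) :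
    ∫ u in (0:ℝ)..1,
        (1 - (1 - u) ^ (n : ℝ) - n * u * (1 - u) ^ ((n : ℝ) - 1))
          * u ^ (α - 2) * (1 - u) ^ (-α)
      = ((n : ℝ) - 1) * (α / (1 - α)) * Real.Gamma α * Real.Gamma ((n : ℝ) - α)
        / Real.Gamma n := by
  obtain ⟨h0, h1⟩ := hα
  obtain ⟨k, rfl⟩ : ∃ k, n = k + 2 := ⟨n - 2, by omega⟩
  have step1 : (∫ u in (0:ℝ)..1,
        (1 - (1 - u) ^ ((k+2 : ℕ) : ℝ) - (k+2:ℕ) * u * (1 - u) ^ (((k+2:ℕ) : ℝ) - 1))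
          * u ^ (α - 2) * (1 - u) ^ (-α))
      = ∫ u in (0:ℝ)..1, ∑ m ∈ Finset.range (k+1),
          ((m:ℝ)+1) * (u ^ (α+1-1) * (1-u) ^ ((m:ℝ)+1-α-1)) := by
    refine intervalIntegral.integral_congr fun x hx => ?_
    rw [Set.uIcc_of_le (by norm_num : (0:ℝ) ≤ 1)] at hx
    obtain ⟨hx0, hx1⟩ := hx
    rcases hx0.eq_or_lt with rfl | hx0
    · norm_num [Real.one_rpow, Real.zero_rpow (by linarith : α+1-1 ≠ 0), Real.zero_rpow h0.ne']
    rcases hx1.eq_or_lt with rfl | hx1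
    · rw [show (1:ℝ) - 1 = 0 by ring, Real.zero_rpow (by linarith : -α ≠ 0), mul_zero]
      symm
      refine Finset.sum_eq_zero fun m hm => ?_
      have hne : (m:ℝ)+1-α-1 ≠ 0 := by
        rcases Nat.eq_zero_or_pos m with h | h
        · subst h; simpa using h0.ne'
        · have : (1:ℝ) ≤ (m:ℝ) := by exact_mod_cast h
          have : (0:ℝ) < (m:ℝ)+1-α-1 := by linarith
          exact this.ne'
      rw [Real.zero_rpow hne, mul_zero, mul_zero]
    have h1x : (0:ℝ) < 1 - x := by linarith
    have e1 : (1-x) ^ ((k+2:ℕ):ℝ) = (1-x)^(k+2) := Real.rpow_natCast _ _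
    have e2 : (1-x) ^ (((k+2:ℕ):ℝ)-1) = (1-x)^(k+1) := by
      rw [show ((k+2:ℕ):ℝ)-1 = ((k+1:ℕ):ℝ) by push_cast; ring, Real.rpow_natCast]
    have key : ∀ m : ℕ, ((m:ℝ)+1) * (x ^ (α+1-1) * (1-x) ^ ((m:ℝ)+1-α-1))
        = (((m:ℝ)+1) * (1-x)^m) * (x^2 * (x ^ (α-2) * (1-x) ^ (-α))) := by
      intro m
      have hx2 : x ^ (α+1-1) = x ^ (α-2) * x^2 := by
        rw [show α+1-1 = (α-2) + ((2:ℕ):ℝ) by push_cast; ring, Real.rpow_add hx0,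
          Real.rpow_natCast]
      have hx3 : (1-x) ^ ((m:ℝ)+1-α-1) = (1-x)^m * (1-x) ^ (-α) := by
        rw [show (m:ℝ)+1-α-1 = ((m:ℕ):ℝ) + (-α) by push_cast; ring, Real.rpow_add h1x,
          Real.rpow_natCast]
      rw [hx2, hx3]; ring
    simp only [key]
    rw [← Finset.sum_mul]
    have hp : 1 - (1-x)^(k+2) - ((k:ℝ)+2)*x*(1-x)^(k+1)
        = x^2 * ∑ m ∈ Finset.range (k+1), ((m:ℝ)+1)*(1-x)^m := by
      have := poly k (1-x)
      linear_combination this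
    rw [e1, e2, show ((k+2:ℕ):ℝ) = (k:ℝ)+2 by push_cast; ring, hp]
    ring
  rw [step1, intervalIntegral.integral_finset_sum (f := fun (m : ℕ) u => ((m:ℝ)+1) * (u ^ (α+1-1) * (1-u) ^ ((m:ℝ)+1-α-1))) (fun m hm =>
    ((beta_integrable (α+1) ((m:ℝ)+1-α) (by linarith)
      (by have : (0:ℝ) ≤ (m:ℝ) := m.cast_nonneg; linarith)).const_mul ((m:ℝ)+1)))]
  have step3 : ∑ m ∈ Finset.range (k+1),
      (∫ u in (0:ℝ)..1, ((m:ℝ)+1) * (u ^ (α+1-1) * (1-u) ^ ((m:ℝ)+1-α-1)))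
      = ∑ m ∈ Finset.range (k+1),
        ((m:ℝ)+1) * (Real.Gamma (α+1) * Real.Gamma ((m:ℝ)+1-α) / Real.Gamma ((m:ℝ)+2)) := by
    refine Finset.sum_congr rfl fun m hm => ?_
    rw [intervalIntegral.integral_const_mul]
    have hb : (0:ℝ) < (m:ℝ)+1-α := by
      have : (0:ℝ) ≤ (m:ℝ) := m.cast_nonneg; linarith
    have := beta_eval (α+1) ((m:ℝ)+1-α) (by linarith) hb
    rw [show (α+1) + ((m:ℝ)+1-α) = (m:ℝ)+2 by ring] at this
    rw [show ((m:ℝ)+1-α-1) = ((m:ℝ)+1-α)-1 by ring, this]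
  rw [step3, sumGamma α ⟨h0, h1⟩ k]
  have c1 : (((k+2:ℕ)):ℝ) = (k:ℝ)+2 := by push_cast; ring
  rw [c1, show (k:ℝ)+2-1 = (k:ℝ)+1 by ring]
end

section
/- For α ∈ (0,1) and n ≥ 2, the ratio of the n-th Taylor coefficient of 1 - t - (1-t)^(1-α) to the n-th Taylor coefficient of 1 - (1-t)^α equals ((1-α)/α) · (Γ(1-α)/Γ(α)) · Γ(n-1+α)/Γ(n-α). -/
open Real

private lemma gamma_shift (x : ℝ) (hx : 0 < x) (m : ℕ) :
    Real.Gamma (x + m) = (∏ i ∈ Finset.range m, (x + i)) * Real.Gamma x := by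
  induction m with
  | zero => simp
  | succ k ih =>
    have hxk : x + k ≠ 0 := by positivity
    have : (x : ℝ) + (k + 1 : ℕ) = (x + k) + 1 := by push_cast; ring
    rw [this, Real.Gamma_add_one hxk, ih, Finset.prod_range_succ]
    ring

private lemma iter_deriv_form (c A B D : ℝ) :
    ∀ n : ℕ, ∀ t : ℝ, t < 1 →
      iteratedDeriv n (fun s : ℝ => A + B * s + D * (1 - s) ^ c) t
        = (if n = 0 then A + B * t else if n = 1 then B else 0)
          + D * ((-1 : ℝ) ^ n * ∏ i ∈ Finset.range n, (c - i)) * (1 - t) ^ (c - n) := by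
  intro n
  induction n with
  | zero => intro t ht; simp
  | succ k ih =>
    intro t ht
    rw [iteratedDeriv_succ]
    have hev : iteratedDeriv k (fun s : ℝ => A + B * s + D * (1 - s) ^ c)
        =ᶠ[nhds t] (fun s => (if k = 0 then A + B * s else if k = 1 then B else 0)
          + D * ((-1 : ℝ) ^ k * ∏ i ∈ Finset.range k, (c - i)) * (1 - s) ^ (c - k)) := by
      filter_upwards [Iio_mem_nhds ht] with s hs
      exact ih s hs
    rw [hev.deriv_eq]
    have h1t : (0:ℝ) < 1 - t := by linarith
    have hpow : HasDerivAt (fun s : ℝ => (1 - s) ^ (c - k))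
        (-1 * (c - k) * (1 - t) ^ (c - k - 1)) t := by
      exact ((hasDerivAt_id t).const_sub 1).rpow_const (Or.inl (ne_of_gt h1t))
    have hlin : HasDerivAt (fun s : ℝ => (if k = 0 then A + B * s else if k = 1 then B else 0))
        (if k = 0 then B else 0) t := by
      rcases k with _ | _ | k
      · simpa using ((hasDerivAt_id t).const_mul B).const_add A
      · simpa using hasDerivAt_const t B
      · simpa using hasDerivAt_const t (0:ℝ)
    have hfull := hlin.add ((hpow.const_mul
      (D * ((-1 : ℝ) ^ k * ∏ i ∈ Finset.range k, (c - i)))))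
    simp only [Pi.add_def] at hfull
    rw [hfull.deriv]
    have hcast : ((k + 1 : ℕ) : ℝ) = (k : ℝ) + 1 := by push_cast; ring
    rw [Finset.prod_range_succ, hcast]
    rcases k with _ | _ | k
    · norm_num; ring
    · norm_num
      rw [show c - 1 - 1 = c - 2 from by ring]
      ring
    · simp only [Nat.succ_ne_zero, if_false, Nat.succ_succ_ne_one]
      push_cast
      rw [show c - ((k:ℝ) + 1 + 1) - 1 = c - ((k:ℝ) + 1 + 1 + 1) from by ring]
      ring

private lemma prod_desc (x : ℝ) (hx1 : x < 1) (m : ℕ) :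
    ∏ i ∈ Finset.range (m + 1), (x - (i : ℝ))
      = (-1 : ℝ) ^ m * x * (Real.Gamma ((1 - x) + m) / Real.Gamma (1 - x)) := by
  have hΓ : Real.Gamma (1 - x) ≠ 0 := ne_of_gt (Real.Gamma_pos_of_pos (by linarith))
  rw [Finset.prod_range_succ']
  have h1 : ∀ i : ℕ, x - ((i + 1 : ℕ) : ℝ) = (-1) * ((1 - x) + i) := by
    intro i; push_cast; ring
  have h2 : ∏ i ∈ Finset.range m, (x - ((i + 1 : ℕ) : ℝ))
      = (-1 : ℝ) ^ m * ∏ i ∈ Finset.range m, ((1 - x) + i) := by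
    simp_rw [h1]
    rw [Finset.prod_mul_distrib, Finset.prod_const, Finset.card_range]
  rw [h2, gamma_shift (1 - x) (by linarith) m]
  push_cast
  field_simp
  ring

set_option maxHeartbeats 1000000 in
theorem stmt_11 (α : ℝ) (hα : α ∈ Set.Ioo (0:ℝ) 1) (n : ℕ) (hn : 2 ≤ n) :
    (iteratedDeriv n (fun t : ℝ => 1 - t - (1 - t) ^ (1 - α)) 0 / (n.factorial : ℝ))
        / (iteratedDeriv n (fun t : ℝ => 1 - (1 - t) ^ α) 0 / (n.factorial : ℝ))
      = ((1 - α) / α) * (Real.Gamma (1 - α) / Real.Gamma α)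
          * (Real.Gamma ((n : ℝ) - 1 + α) / Real.Gamma ((n : ℝ) - α)) := by
  obtain ⟨hα0, hα1⟩ := hα
  obtain ⟨m, rfl⟩ : ∃ m, n = m + 1 := ⟨n - 1, by omega⟩
  have hf1 : (fun t : ℝ => 1 - t - (1 - t) ^ (1 - α))
      = (fun t : ℝ => 1 + (-1) * t + (-1) * (1 - t) ^ (1 - α)) := by
    funext t; ring
  have hf2 : (fun t : ℝ => 1 - (1 - t) ^ α)
      = (fun t : ℝ => 1 + 0 * t + (-1) * (1 - t) ^ α) := by
    funext t; ring
  rw [hf1, hf2, iter_deriv_form (1 - α) 1 (-1) (-1) (m + 1) 0 (by norm_num),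
    iter_deriv_form α 1 0 (-1) (m + 1) 0 (by norm_num)]
  have hm0 : m + 1 ≠ 0 := by omega
  have hm1 : m + 1 ≠ 1 := by omega
  simp only [hm0, hm1, if_false, sub_zero, Real.one_rpow, zero_add, mul_one]
  have hfac : ((m + 1).factorial : ℝ) ≠ 0 := Nat.cast_ne_zero.mpr (m + 1).factorial_pos.ne'
  rw [div_div_div_cancel_right₀ hfac]
  have hK : (-1:ℝ) * (-1) ^ (m + 1) ≠ 0 := by positivity
  rw [← mul_assoc, ← mul_assoc, mul_div_mul_left _ _ hK,
    prod_desc α hα1 m, prod_desc (1 - α) (by linarith) m,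
    show (1 : ℝ) - (1 - α) = α from by ring]
  have hmc : ((m + 1 : ℕ) : ℝ) = (m : ℝ) + 1 := by push_cast; ring
  rw [show ((1 : ℝ) - α) + m = ((m + 1 : ℕ) : ℝ) - α from by rw [hmc]; ring,
    show α + (m : ℝ) = ((m + 1 : ℕ) : ℝ) - 1 + α from by rw [hmc]; ring]
  have hΓα : Real.Gamma α ≠ 0 := ne_of_gt (Real.Gamma_pos_of_pos hα0)
  have hΓ1α : Real.Gamma (1 - α) ≠ 0 := ne_of_gt (Real.Gamma_pos_of_pos (by linarith))
  have hΓn : Real.Gamma (((m + 1 : ℕ) : ℝ) - α) ≠ 0 := by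
    refine ne_of_gt (Real.Gamma_pos_of_pos ?_)
    rw [hmc]
    have : (0:ℝ) ≤ m := Nat.cast_nonneg m
    linarith
  have hsm : ((-1 : ℝ)) ^ m ≠ 0 := by positivity
  have hα0' : α ≠ 0 := ne_of_gt hα0
  rw [mul_assoc, mul_assoc, mul_div_mul_left _ _ hsm]
  field_simp
end

section
/- Let t be a finite rooted plane tree with L(t) ≥ 2 leaves, and let (ξ_u)_{u internal node of t} be independent random variables with P(ξ_u ≥ θ) = (1+θ)^(1-k_u) for θ ≥ 0, where k_u ≥ 2 is the number of children of u. Then for every internal node u, the probability that ξ_u = min over internal nodes v of ξ_v equals (k_u - 1)/(L(t) - 1). -/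
open MeasureTheory ProbabilityTheory Set

/-- Pruning at nodes: for a finite tree whose internal nodes `v : ι` have
`k v ≥ 2` children and `L ≥ 2` leaves (so that `L - 1 = ∑ (k v - 1)`), if the
marks `ξ v` are independent with `P(ξ v ≥ θ) = (1+θ)^(1 - k v)`, then the
probability that the node `u` carries the smallest mark is `(k u - 1)/(L - 1)`. -/
theorem stmt_12 {Ω : Type*} [MeasurableSpace Ω] (μ : Measure Ω) [IsProbabilityMeasure μ]
    {ι : Type*} [Fintype ι] [Nonempty ι]
    (k : ι → ℕ) (hk : ∀ v, 2 ≤ k v)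
    (L : ℕ) (hL : 2 ≤ L)
    (hLsum : (L : ℝ) - 1 = ∑ v : ι, ((k v : ℝ) - 1))
    (ξ : ι → Ω → ℝ) (hmeas : ∀ v, Measurable (ξ v))
    (hindep : iIndepFun ξ μ)
    (hdist : ∀ v, ∀ θ : ℝ, 0 ≤ θ →
      μ {ω | θ ≤ ξ v ω} = ENNReal.ofReal ((1 + θ) ^ ((1 : ℝ) - (k v : ℝ))))
    (u : ι) :
    μ {ω | ∀ v, ξ u ω ≤ ξ v ω} = ENNReal.ofReal (((k u : ℝ) - 1) / ((L : ℝ) - 1)) := by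
  classical
  have hL1 : (0:ℝ) < (L:ℝ) - 1 := by
    have : (2:ℝ) ≤ (L:ℝ) := by exact_mod_cast hL
    linarith
  have hsurv : ∀ v (θ : ℝ), 0 ≤ θ →
      μ (ξ v ⁻¹' Ici θ) = ENNReal.ofReal ((1 + θ) ^ ((1 : ℝ) - (k v : ℝ))) := by
    intro v θ hθ
    have : ξ v ⁻¹' Ici θ = {ω | θ ≤ ξ v ω} := by ext ω; simp
    rw [this]; exact hdist v θ hθ
  by_cases hall : ∀ v : ι, v = u
  · -- degenerate case : only one internal node
    have hE : {ω | ∀ v, ξ u ω ≤ ξ v ω} = Set.univ := by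
      ext ω; simp only [mem_univ, iff_true, mem_setOf_eq]
      intro v; rw [hall v]
    have huniv : (Finset.univ : Finset ι) = {u} := by
      ext v; simp [hall v]
    have hsum : (L:ℝ) - 1 = (k u : ℝ) - 1 := by
      rw [hLsum, huniv, Finset.sum_singleton]
    rw [hE, measure_univ, ← hsum, div_self hL1.ne', ENNReal.ofReal_one]
  -- main case
  push_neg at hall
  obtain ⟨w, hw⟩ := hall
  set T : Finset ι := Finset.univ.erase u with hT
  have hwT : w ∈ T := by simp [hT, hw]
  set α : ℝ := (k u : ℝ) - 1 with hα
  set β : ℝ := ∑ v ∈ T, ((k v : ℝ) - 1) with hβ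
  have hαpos : 0 < α := by
    have : (2:ℝ) ≤ (k u : ℝ) := by exact_mod_cast hk u
    simp only [hα]; linarith
  have hβpos : 0 < β := by
    refine Finset.sum_pos (fun v _ => ?_) ⟨w, hwT⟩
    have : (2:ℝ) ≤ (k v : ℝ) := by exact_mod_cast hk v
    linarith
  have hαβ : α + β = (L:ℝ) - 1 := by
    rw [hLsum, hα, hβ, hT]
    exact Finset.add_sum_erase Finset.univ (fun v => ((k v : ℝ) - 1)) (Finset.mem_univ u)
  -- the vector of the other marks
  set Y : Ω → (T → ℝ) := fun ω i => ξ i.1 ω with hY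
  have hYmeas : Measurable Y := measurable_pi_lambda _ fun i => hmeas i.1
  have hXY : IndepFun (ξ u) Y μ := by
    have hdisj : Disjoint ({u} : Finset ι) T := by simp [hT]
    have h0 := hindep.indepFun_finset {u} T hdisj hmeas
    have h1 := h0.comp (φ := fun g : (({u} : Finset ι) → ℝ) =>
      g ⟨u, Finset.mem_singleton_self u⟩) (ψ := id)
      (measurable_pi_apply (X := fun _ : ({u} : Finset ι) => ℝ) ⟨u, Finset.mem_singleton_self u⟩) measurable_id
    exact h1
  set T' : Set (ℝ × (T → ℝ)) := {p | ∀ i : T, p.1 ≤ p.2 i} with hT'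
  have hT'meas : MeasurableSet T' := by
    have : T' = ⋂ i : T, {p : ℝ × (T → ℝ) | p.1 ≤ p.2 i} := by
      ext p; simp [hT']
    rw [this]
    exact MeasurableSet.iInter fun i =>
      measurableSet_le measurable_fst ((measurable_pi_apply i).comp measurable_snd)
  have hE : {ω | ∀ v, ξ u ω ≤ ξ v ω} = (fun ω => (ξ u ω, Y ω)) ⁻¹' T' := by
    ext ω
    constructor
    · intro h i; exact h i.1
    · intro h v
      by_cases hv : v = u
      · subst hv; exact le_rfl
      · exact h ⟨v, by simp [hT, hv]⟩
  set ν : Measure ℝ := μ.map (ξ u) with hν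
  haveI : IsProbabilityMeasure ν := Measure.isProbabilityMeasure_map (hmeas u).aemeasurable
  have hνIci : ∀ θ : ℝ, 0 ≤ θ → ν (Ici θ) = ENNReal.ofReal ((1 + θ) ^ (-α)) := by
    intro θ hθ
    rw [hν, Measure.map_apply (hmeas u) measurableSet_Ici, hsurv u θ hθ]
    congr 1
    norm_num [hα]
  -- reduce to an integral against ν
  have step1 : μ {ω | ∀ v, ξ u ω ≤ ξ v ω}
      = ∫⁻ θ, ∏ v ∈ T, μ (ξ v ⁻¹' Ici θ) ∂ν := by
    rw [hE, ← Measure.map_apply ((hmeas u).prodMk hYmeas) hT'meas,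
      (indepFun_iff_map_prod_eq_prod_map_map (hmeas u).aemeasurable hYmeas.aemeasurable).1 hXY,
      Measure.prod_apply hT'meas]
    refine lintegral_congr fun θ => ?_
    have hset : Y ⁻¹' (Prod.mk θ ⁻¹' T') = ⋂ v ∈ T, ξ v ⁻¹' Ici θ := by
      ext ω
      simp only [mem_preimage, hT', mem_setOf_eq, mem_iInter, mem_Ici, hY]
      exact ⟨fun h v hv => h ⟨v, hv⟩, fun h i => h i.1 i.2⟩
    rw [Measure.map_apply hYmeas (hT'meas.preimage measurable_prodMk_left), hset,
      hindep.measure_inter_preimage_eq_mul T (fun v _ => measurableSet_Ici)]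
  -- integral facts
  have hν0 : ν (Ici (0:ℝ))ᶜ = 0 := by
    have h1 : ν (Ici (0:ℝ)) = 1 := by
      rw [hνIci 0 le_rfl]
      norm_num
    rw [measure_compl measurableSet_Ici (measure_ne_top _ _), h1, measure_univ, tsub_self]
  have step2 : ∫⁻ θ, (∏ v ∈ T, μ (ξ v ⁻¹' Ici θ)) ∂ν
      = ∫⁻ θ in Ici 0, (∏ v ∈ T, μ (ξ v ⁻¹' Ici θ)) ∂ν := by
    rw [← lintegral_add_compl (fun θ => ∏ v ∈ T, μ (ξ v ⁻¹' Ici θ))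
      (measurableSet_Ici (a := (0:ℝ))) (μ := ν),
      setLIntegral_measure_zero _ _ hν0, add_zero]
  have step3 : ∫⁻ θ in Ici 0, (∏ v ∈ T, μ (ξ v ⁻¹' Ici θ)) ∂ν
      = ∫⁻ θ in Ici 0, ENNReal.ofReal ((1+θ) ^ (-β)) ∂ν := by
    refine setLIntegral_congr_fun measurableSet_Ici (fun θ hθ => ?_)
    have hθ0 : (0:ℝ) ≤ θ := hθ
    have h1θ : (0:ℝ) < 1 + θ := by linarith
    have hprod : ∀ v ∈ T, μ (ξ v ⁻¹' Ici θ) = ENNReal.ofReal ((1+θ) ^ ((1:ℝ) - (k v:ℝ))) :=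
      fun v _ => hsurv v θ hθ0
    have hsumexp : ∑ v ∈ T, ((1:ℝ) - (k v:ℝ)) = -β := by
      rw [hβ, ← Finset.sum_neg_distrib]
      exact Finset.sum_congr rfl fun v _ => by ring
    rw [Finset.prod_congr rfl hprod, ← ENNReal.ofReal_prod_of_nonneg
      (fun v _ => Real.rpow_nonneg h1θ.le _), ← Real.rpow_sum_of_pos h1θ, hsumexp]
  have hfmeas : Measurable fun θ : ℝ => (1+θ) ^ (-β) := by fun_prop
  have step4 : ∫⁻ θ in Ici 0, ENNReal.ofReal ((1+θ) ^ (-β)) ∂ν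
      = ∫⁻ t in Ioi 0, (ν.restrict (Ici 0)) {a | t < (1+a) ^ (-β)} := by
    refine lintegral_eq_lintegral_meas_lt _ ?_ hfmeas.aemeasurable
    refine (ae_restrict_iff' measurableSet_Ici).2 (ae_of_all _ fun θ hθ => ?_)
    have hθ0 : (0:ℝ) ≤ θ := hθ
    exact Real.rpow_nonneg (by linarith) _
  set γ : ℝ := α / β with hγ
  have hγpos : 0 < γ := div_pos hαpos hβpos
  have step5 : ∀ t ∈ Ioi (0:ℝ), (ν.restrict (Ici 0)) {a | t < (1+a) ^ (-β)}
      = (Ioo (0:ℝ) 1).indicator (fun t => 1 - ENNReal.ofReal (t ^ γ)) t := by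
    intro t ht
    rw [mem_Ioi] at ht
    have hsetm : MeasurableSet {a : ℝ | t < (1+a) ^ (-β)} :=
      measurableSet_lt measurable_const hfmeas
    rw [Measure.restrict_apply hsetm]
    by_cases ht1 : 1 ≤ t
    · have hempty : {a : ℝ | t < (1+a) ^ (-β)} ∩ Ici 0 = ∅ := by
        ext θ
        simp only [mem_inter_iff, mem_setOf_eq, mem_Ici, mem_empty_iff_false, iff_false, not_and]
        intro hlt hθ
        have : (1+θ) ^ (-β) ≤ 1 :=
          Real.rpow_le_one_of_one_le_of_nonpos (by linarith) (by linarith)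
        linarith
      rw [hempty, measure_empty, indicator_of_notMem (by simp [ht1.not_gt])]
    · push_neg at ht1
      obtain ⟨c, hc⟩ : ∃ c : ℝ, c = t ^ (-β)⁻¹ - 1 := ⟨_, rfl⟩
      have htc : 1 + c = t ^ (-β)⁻¹ := by rw [hc]; ring
      have hc1 : (1:ℝ) < t ^ (-β)⁻¹ := by
        rw [Real.one_lt_rpow_iff_of_pos ht]
        exact Or.inr ⟨ht1, inv_lt_zero.mpr (neg_lt_zero.mpr hβpos)⟩
      have hcpos : 0 < c := by rw [hc]; linarith
      have htp : (0:ℝ) < t ^ (-β)⁻¹ := Real.rpow_pos_of_pos ht _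
      have hrw : (t ^ (-β)⁻¹) ^ (-β) = t := by
        rw [← Real.rpow_mul ht.le, inv_mul_cancel₀ (by linarith : (-β) ≠ 0), Real.rpow_one]
      have hkey : ∀ θ : ℝ, 0 ≤ θ → (t < (1+θ) ^ (-β) ↔ θ < c) := by
        intro θ hθ
        have h1θ : (0:ℝ) < 1+θ := by linarith
        constructor
        · intro h
          have h2 := (Real.rpow_lt_rpow_iff_of_neg htp h1θ (neg_lt_zero.mpr hβpos)).mp
            (by rw [hrw]; exact h)
          linarith
        · intro h
          have h2 := (Real.rpow_lt_rpow_iff_of_neg htp h1θ (neg_lt_zero.mpr hβpos)).mpr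
            (by rw [← htc] at *; linarith)
          rw [hrw] at h2
          exact h2
      have hset : {a : ℝ | t < (1+a) ^ (-β)} ∩ Ici 0 = Ico 0 c := by
        ext θ
        simp only [mem_inter_iff, mem_setOf_eq, mem_Ici, mem_Ico]
        constructor
        · rintro ⟨h1, h2⟩; exact ⟨h2, (hkey θ h2).mp h1⟩
        · rintro ⟨h1, h2⟩; exact ⟨(hkey θ h1).mpr h2, h1⟩
      have hν1 : ν (Ici (0:ℝ)) = 1 := by
        rw [hνIci 0 le_rfl]; norm_num
      have hpow : (1+c) ^ (-α) = t ^ γ := by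
        rw [htc, ← Real.rpow_mul ht.le, hγ]
        congr 1
        field_simp
      have hmeasIco : ν (Ico 0 c) = 1 - ENNReal.ofReal (t ^ γ) := by
        rw [← Ici_diff_Ici, measure_diff (Ici_subset_Ici.mpr hcpos.le)
          measurableSet_Ici.nullMeasurableSet (measure_ne_top _ _),
          hνIci c hcpos.le, hν1, hpow]
      rw [hset, hmeasIco, indicator_of_mem (mem_Ioo.mpr ⟨ht, ht1⟩)]
  have step6 : ∫⁻ t in Ioi 0, (ν.restrict (Ici 0)) {a | t < (1+a) ^ (-β)}
      = ∫⁻ t in Ioo (0:ℝ) 1, (1 - ENNReal.ofReal (t ^ γ)) := by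
    rw [setLIntegral_congr_fun measurableSet_Ioi step5,
      lintegral_indicator measurableSet_Ioo _,
      Measure.restrict_restrict measurableSet_Ioo, inter_eq_left.mpr Ioo_subset_Ioi_self]
  have step7 : ∫⁻ t in Ioo (0:ℝ) 1, (1 - ENNReal.ofReal (t ^ γ))
      = ∫⁻ t in Ioo (0:ℝ) 1, ENNReal.ofReal (1 - t ^ γ) := by
    refine setLIntegral_congr_fun measurableSet_Ioo (fun t ht => ?_)
    rw [ENNReal.ofReal_sub 1 (Real.rpow_nonneg ht.1.le _), ENNReal.ofReal_one]
  have hii : IntervalIntegrable (fun t : ℝ => t ^ γ) volume 0 1 :=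
    _root_.intervalIntegral.intervalIntegrable_rpow' (by linarith)
  have hInt : IntegrableOn (fun t : ℝ => 1 - t ^ γ) (Ioo 0 1) := by
    have h1 : IntegrableOn (fun t : ℝ => t ^ γ) (Ioo 0 1) :=
      ((intervalIntegrable_iff_integrableOn_Ioc_of_le zero_le_one).mp hii).mono_set
        Ioo_subset_Ioc_self
    have h2 : IntegrableOn (fun _ : ℝ => (1:ℝ)) (Ioo 0 1) :=
      integrableOn_const (by rw [Real.volume_Ioo]; exact ENNReal.ofReal_ne_top)
    exact h2.sub h1
  have step8 : ∫⁻ t in Ioo (0:ℝ) 1, ENNReal.ofReal (1 - t ^ γ)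
      = ENNReal.ofReal (∫ t in Ioo (0:ℝ) 1, (1 - t ^ γ)) := by
    refine (ofReal_integral_eq_lintegral_ofReal hInt ?_).symm
    refine (ae_restrict_iff' measurableSet_Ioo).2 (ae_of_all _ fun t ht => ?_)
    have h1 : t ^ γ ≤ 1 := Real.rpow_le_one ht.1.le ht.2.le hγpos.le
    simp only [Pi.zero_apply]
    linarith
  have step9 : ∫ t in Ioo (0:ℝ) 1, (1 - t ^ γ) = 1 - 1/(γ+1) := by
    rw [← integral_Ioc_eq_integral_Ioo, ← _root_.intervalIntegral.integral_of_le zero_le_one,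
      _root_.intervalIntegral.integral_sub intervalIntegrable_const hii,
      integral_rpow (Or.inl (by linarith))]
    rw [Real.one_rpow, Real.zero_rpow (by linarith : γ + 1 ≠ 0)]
    simp [one_div]
  rw [step1, step2, step3, step4, step6, step7, step8, step9]
  congr 1
  rw [hγ, ← hαβ]
  have hβne : β ≠ 0 := hβpos.ne'
  have hαβne : α + β ≠ 0 := by positivity
  field_simp
  ring
end

section
/- Let α ∈ (0,1). The function φ_α(r) = (1-α) r ∫₀¹ (1/(1-(1-x)^α)) · (1/(1-rx)^α - 1) dx is well-defined for r ∈ [0,1), satisfies φ_α(0) = 0, has nonnegative Taylor coefficients at 0, and φ_α(r) ≤ 1 for r ∈ [0,1). -/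
set_option maxHeartbeats 1000000

open Real MeasureTheory

noncomputable def binc (α : ℝ) (n : ℕ) : ℝ :=
  (∏ i ∈ Finset.range n, (α + i)) / n.factorial

lemma binc_zero (α : ℝ) : binc α 0 = 1 := by simp [binc]

lemma binc_nonneg {α : ℝ} (hα : 0 ≤ α) (n : ℕ) : 0 ≤ binc α n := by
  apply div_nonneg _ (by positivity)
  exact Finset.prod_nonneg fun i _ => by positivity

lemma binc_succ (α : ℝ) (n : ℕ) : binc α (n + 1) = binc α n * ((α + n) / (n + 1)) := by
  rw [binc, binc, Finset.prod_range_succ, Nat.factorial_succ]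
  push_cast
  rw [div_mul_div_comm, mul_comm (n.factorial : ℝ)]

lemma binc_rec (α : ℝ) (n : ℕ) : ((n : ℝ) + 1) * binc α (n + 1) = (α + n) * binc α n := by
  rw [binc_succ]
  have : ((n : ℝ) + 1) ≠ 0 := by positivity
  field_simp

lemma summable_binc {α : ℝ} (hα : 0 ≤ α) {t : ℝ} (h0 : 0 ≤ t) (ht : t < 1) :
    Summable (fun n => binc α n * t ^ n) := by
  rcases eq_or_lt_of_le h0 with h0 | h0
  · apply summable_of_ne_finset_zero (s := {0})
    intro n hn
    simp only [Finset.mem_singleton] at hn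
    simp [← h0, zero_pow hn]
  apply summable_of_ratio_norm_eventually_le (r := (t + 1) / 2) (by linarith)
  have hlim : Filter.Tendsto (fun n : ℕ => t * ((α + n) / (n + 1))) Filter.atTop (nhds t) := by
    have : Filter.Tendsto (fun n : ℕ => (α + n) / (n + 1)) Filter.atTop (nhds 1) := by
      have h1 : Filter.Tendsto (fun n : ℕ => (α - 1) * (1 / (n + 1)) + 1) Filter.atTop
          (nhds ((α - 1) * 0 + 1)) :=
        ((tendsto_const_nhds).mul tendsto_one_div_add_atTop_nhds_zero_nat).add tendsto_const_nhds
      have h2 : (fun n : ℕ => (α - 1) * (1 / (n + 1)) + 1) = fun n : ℕ => (α + n) / (n + 1) := by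
        funext n
        have : ((n:ℝ) + 1) ≠ 0 := by positivity
        field_simp
        ring
      rw [h2] at h1
      simpa using h1
    simpa using (tendsto_const_nhds (x := t)).mul this
  have hev : ∀ᶠ n : ℕ in Filter.atTop, t * ((α + n) / (n + 1)) ≤ (t + 1) / 2 := by
    have := hlim.eventually_le_const (show t < (t+1)/2 by linarith)
    exact this
  filter_upwards [hev] with n hn
  have hb := binc_nonneg hα n
  have hb' := binc_nonneg hα (n + 1)
  rw [Real.norm_eq_abs, Real.norm_eq_abs, abs_of_nonneg (by positivity), abs_of_nonneg (by positivity)]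
  rw [binc_succ, pow_succ]
  have hnn : (0:ℝ) ≤ (α + n) / (n + 1) := by positivity
  calc binc α n * ((α + n) / (n + 1)) * (t ^ n * t)
      = (t * ((α + n) / (n + 1))) * (binc α n * t ^ n) := by ring
    _ ≤ ((t + 1) / 2) * (binc α n * t ^ n) := by
        apply mul_le_mul_of_nonneg_right hn (by positivity)

lemma summable_n_binc {α : ℝ} (hα : 0 ≤ α) {t : ℝ} (h0 : 0 ≤ t) (ht : t < 1) :
    Summable (fun n : ℕ => (n : ℝ) * binc α n * t ^ n) := by
  rcases eq_or_lt_of_le h0 with h0 | h0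
  · apply summable_of_ne_finset_zero (s := {0})
    intro n hn
    simp only [Finset.mem_singleton] at hn
    simp [← h0, zero_pow hn]
  apply summable_of_ratio_norm_eventually_le (r := (t + 1) / 2) (by linarith)
  have hlim : Filter.Tendsto (fun n : ℕ => t * ((α + n) / n)) Filter.atTop (nhds t) := by
    have h1 : Filter.Tendsto (fun n : ℕ => α * (1 / n) + 1) Filter.atTop
        (nhds (α * 0 + 1)) :=
      ((tendsto_const_nhds).mul (tendsto_one_div_atTop_nhds_zero_nat)).add tendsto_const_nhds
    have h1' : Filter.Tendsto (fun n : ℕ => (α + n) / n) Filter.atTop (nhds (α * 0 + 1)) := by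
      apply h1.congr'
      filter_upwards [Filter.eventually_gt_atTop 0] with n hn
      have : (n:ℝ) ≠ 0 := Nat.cast_ne_zero.mpr hn.ne'
      field_simp
    simpa using (tendsto_const_nhds (x := t)).mul h1'
  have hev := hlim.eventually_le_const (show t < (t+1)/2 by linarith)
  filter_upwards [hev, Filter.eventually_ge_atTop 1] with n hn hn1
  have hb := binc_nonneg hα n
  have hb' := binc_nonneg hα (n + 1)
  rw [Real.norm_eq_abs, Real.norm_eq_abs, abs_of_nonneg (by positivity), abs_of_nonneg (by positivity)]
  have hrec := binc_rec α n
  have hnpos : (0:ℝ) < n := by exact_mod_cast hn1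
  push_cast
  calc ((n:ℝ) + 1) * binc α (n + 1) * t ^ (n + 1)
      = (α + n) * binc α n * (t ^ n * t) := by rw [hrec, pow_succ]
    _ = (t * ((α + n) / n)) * ((n:ℝ) * binc α n * t ^ n) := by field_simp
    _ ≤ ((t + 1) / 2) * ((n:ℝ) * binc α n * t ^ n) := by
        apply mul_le_mul_of_nonneg_right hn (by positivity)

lemma summable_binc' {α : ℝ} (hα : 0 ≤ α) {y : ℝ} (hy : |y| < 1) :
    Summable (fun n : ℕ => binc α n * y ^ n) := by
  apply Summable.of_norm
  apply (summable_binc hα (abs_nonneg y) hy).congr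
  intro n
  rw [norm_mul, norm_pow, Real.norm_eq_abs, Real.norm_eq_abs,
    abs_of_nonneg (binc_nonneg hα n)]

lemma binom_tsum {α : ℝ} (hα : 0 < α) {u : ℝ} (hu : |u| < 1) :
    ∑' n : ℕ, binc α n * u ^ n = (1 - u) ^ (-α) := by
  have h1u : 0 < 1 - u := by
    have := abs_lt.mp hu
    linarith [this.2]
  by_cases hu0 : u = 0
  · subst hu0
    rw [tsum_eq_single 0 (fun n hn => by simp [zero_pow hn])]
    simp [binc_zero]
  -- setup
  set ρ : ℝ := (|u| + 1) / 2 with hρdef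
  have hρ0 : 0 < ρ := by positivity
  have huρ : |u| < ρ := by rw [hρdef]; linarith
  have hρ1 : ρ < 1 := by rw [hρdef]; linarith
  set t : Set ℝ := Set.Ioo (-ρ) ρ with htdef
  have ht : IsOpen t := isOpen_Ioo
  have h't : IsPreconnected t := (convex_Ioo _ _).isPreconnected
  set S : ℝ → ℝ := fun z => ∑' n : ℕ, binc α n * z ^ n with hSdef
  set T : ℝ → ℝ := fun z => ∑' n : ℕ, binc α n * ((n : ℝ) * z ^ (n - 1)) with hTdef
  set U : ℕ → ℝ := fun n => (n : ℝ) * binc α n * ρ ^ (n - 1) with hUdef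
  have hU : Summable U := by
    apply ((summable_n_binc hα.le hρ0.le hρ1).mul_left ρ⁻¹).congr
    intro n
    cases n with
    | zero => simp [hUdef]
    | succ m =>
      rw [hUdef]
      simp only [Nat.add_sub_cancel]
      rw [pow_succ]
      field_simp
  have memt : ∀ {y : ℝ}, y ∈ t → |y| < ρ := by
    intro y hy
    rw [htdef] at hy
    exact abs_lt.mpr ⟨hy.1, hy.2⟩
  have hg : ∀ (n : ℕ) (y : ℝ), y ∈ t →
      HasDerivAt (fun z => binc α n * z ^ n) (binc α n * ((n : ℝ) * y ^ (n - 1))) y :=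
    fun n y _ => (hasDerivAt_pow n y).const_mul (binc α n)
  have hg' : ∀ (n : ℕ) (y : ℝ), y ∈ t → ‖binc α n * ((n : ℝ) * y ^ (n - 1))‖ ≤ U n := by
    intro n y hy
    rw [norm_mul, norm_mul, Real.norm_eq_abs, Real.norm_eq_abs, Real.norm_eq_abs,
      abs_of_nonneg (binc_nonneg hα.le n), abs_of_nonneg (Nat.cast_nonneg n), abs_pow]
    rw [hUdef]
    have : |y| ^ (n - 1) ≤ ρ ^ (n - 1) := pow_le_pow_left₀ (abs_nonneg y) (memt hy).le _
    calc binc α n * ((n:ℝ) * |y| ^ (n-1)) ≤ binc α n * ((n:ℝ) * ρ ^ (n-1)) := by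
          apply mul_le_mul_of_nonneg_left _ (binc_nonneg hα.le n)
          exact mul_le_mul_of_nonneg_left this (Nat.cast_nonneg n)
      _ = (n:ℝ) * binc α n * ρ ^ (n-1) := by ring
  have hg0 : Summable fun n : ℕ => binc α n * (0:ℝ) ^ n := by
    apply summable_of_ne_finset_zero (s := {0})
    intro n hn
    simp only [Finset.mem_singleton] at hn
    simp [zero_pow hn]
  have h0t : (0:ℝ) ∈ t := by
    rw [htdef]
    constructor <;> [linarith; linarith]
  have hderiv : ∀ y ∈ t, HasDerivAt S (T y) y := by
    intro y hy
    exact hasDerivAt_tsum_of_isPreconnected hU ht h't hg hg' h0t hg0 hy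
  -- summability facts for y ∈ t
  have hSsum : ∀ {y : ℝ}, y ∈ t → Summable (fun n : ℕ => binc α n * y ^ n) :=
    fun {y} hy => summable_binc' hα.le ((memt hy).trans hρ1)
  have hTsum : ∀ {y : ℝ}, y ∈ t →
      Summable (fun n : ℕ => binc α n * ((n : ℝ) * y ^ (n - 1))) := by
    intro y hy
    exact Summable.of_norm_bounded hU (fun n => hg' n y hy)
  -- the key identity
  have key : ∀ y ∈ t, (1 - y) * T y = α * S y := by
    intro y hy
    have hA := hTsum hy
    have hA' : Summable (fun n : ℕ => binc α (n+1) * (((n:ℕ)+1 : ℝ) * y ^ n)) := by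
      have := (summable_nat_add_iff 1).mpr hA
      apply this.congr
      intro n
      simp
    have hterm : ∀ n : ℕ, y * (binc α n * ((n:ℝ) * y ^ (n-1))) = binc α n * ((n:ℝ) * y ^ n) := by
      intro n
      cases n with
      | zero => simp
      | succ m =>
        simp only [Nat.add_sub_cancel]
        rw [pow_succ]
        ring
    have hBsum : Summable (fun n : ℕ => binc α n * ((n : ℝ) * y ^ n)) :=
      (hA.mul_left y).congr hterm
    have hTy : T y = ∑' n : ℕ, binc α (n+1) * (((n:ℕ)+1 : ℝ) * y ^ n) := by
      have h0 : T y = ∑' n : ℕ, binc α n * ((n:ℝ) * y ^ (n-1)) := rfl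
      rw [h0, Summable.tsum_eq_zero_add hA]
      simp
    have hyTy : y * T y = ∑' n : ℕ, binc α n * ((n : ℝ) * y ^ n) := by
      have h0 : y * T y = y * ∑' n : ℕ, binc α n * ((n:ℝ) * y ^ (n-1)) := rfl
      rw [h0, ← tsum_mul_left]
      exact tsum_congr hterm
    have hsub : (1 - y) * T y
        = ∑' n : ℕ, (binc α (n+1) * (((n:ℕ)+1 : ℝ) * y ^ n) - binc α n * ((n:ℝ) * y ^ n)) := by
      rw [Summable.tsum_sub hA' hBsum, ← hTy, ← hyTy]
      ring
    rw [hsub]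
    have hS0 : S y = ∑' n : ℕ, binc α n * y ^ n := rfl
    rw [hS0, ← tsum_mul_left]
    apply tsum_congr
    intro n
    have h := binc_rec α n
    calc binc α (n+1) * (((n:ℕ)+1 : ℝ) * y ^ n) - binc α n * ((n:ℝ) * y ^ n)
        = (((n:ℝ)+1) * binc α (n+1)) * y ^ n - (n:ℝ) * binc α n * y ^ n := by push_cast; ring
      _ = ((α + n) * binc α n) * y ^ n - (n:ℝ) * binc α n * y ^ n := by rw [h]
      _ = α * (binc α n * y ^ n) := by ring
  -- F is constant
  set F : ℝ → ℝ := fun y => S y * (1 - y) ^ α with hFdef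
  have hF : ∀ y ∈ t, HasDerivAt F 0 y := by
    intro y hy
    have h1y : 0 < 1 - y := by
      have := (memt hy).trans hρ1
      have := (abs_lt.mp ((memt hy).trans_le hρ1.le)).2
      linarith
    have d0 : HasDerivAt (fun z : ℝ => 1 - z) (-1 : ℝ) y := by
      simpa using (hasDerivAt_id y).const_sub 1
    have d1 := d0.rpow_const (p := α) (Or.inl h1y.ne')
    have d2 : HasDerivAt F (T y * (1 - y) ^ α + S y * (-1 * α * (1 - y) ^ (α - 1))) y := (hderiv y hy).mul d1
    convert d2 using 1
    have hrw : (1 - y) ^ α = (1 - y) ^ (α - 1) * (1 - y) := by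
      rw [← Real.rpow_add_one h1y.ne' (α - 1)]
      ring_nf
    have hk := key y hy
    rw [hrw]
    linear_combination (-((1 - y) ^ (α - 1))) * hk
  have hu_t : u ∈ t := by
    rw [htdef]
    exact ⟨neg_lt_of_abs_lt huρ, lt_of_abs_lt huρ⟩
  have habs : (0:ℝ) < |u| := abs_pos.mpr hu0
  have hsub : Set.Icc (-|u|) |u| ⊆ t := by
    intro z hz
    rw [htdef]
    exact ⟨lt_of_lt_of_le (neg_lt_neg huρ) hz.1, lt_of_le_of_lt hz.2 huρ⟩
  have hdiff : DifferentiableOn ℝ F (Set.Icc (-|u|) |u|) := fun z hz =>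
    (hF z (hsub hz)).differentiableAt.differentiableWithinAt
  have hd0 : ∀ z ∈ Set.Ico (-|u|) |u|, derivWithin F (Set.Icc (-|u|) |u|) z = 0 := by
    intro z hz
    have hz' : z ∈ Set.Icc (-|u|) |u| := Set.Ico_subset_Icc_self hz
    exact (hF z (hsub hz')).hasDerivWithinAt.derivWithin ((uniqueDiffOn_Icc (by linarith)) z hz')
  have hconst := constant_of_derivWithin_zero hdiff hd0
  have hFu : F u = F 0 := by
    have h1 := hconst u ⟨neg_abs_le u, le_abs_self u⟩
    have h2 := hconst 0 ⟨by linarith, by linarith⟩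
    rw [h1, h2]
  have hF0 : F 0 = 1 := by
    rw [hFdef]
    simp only
    have : S 0 = 1 := by
      have h0 : S 0 = ∑' n : ℕ, binc α n * (0:ℝ) ^ n := rfl
      rw [h0, tsum_eq_single 0 (fun n hn => by simp [zero_pow hn])]
      simp [binc_zero]
    rw [this, sub_zero, Real.one_rpow, one_mul]
  have hne : (1 - u) ^ α ≠ 0 := (Real.rpow_pos_of_pos h1u α).ne'
  have : S u * (1 - u) ^ α = 1 := by
    rw [show S u * (1 - u) ^ α = F u from rfl, hFu, hF0]
  have hSu : S u = ((1 - u) ^ α)⁻¹ := eq_inv_of_mul_eq_one_left this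
  rw [show ∑' n : ℕ, binc α n * u ^ n = S u from rfl, hSu, Real.rpow_neg h1u.le]

lemma denom_lb {α : ℝ} (hα0 : 0 < α) (hα1 : α ≤ 1) {x : ℝ} (hx0 : 0 ≤ x) (hx1 : x ≤ 1) :
    α * x ≤ 1 - (1 - x) ^ α := by
  have h := rpow_one_add_le_one_add_mul_self (s := -x) (by linarith) hα0.le hα1
  rw [show (1 : ℝ) + -x = 1 - x by ring] at h
  linarith

lemma denom_pos {α : ℝ} (hα0 : 0 < α) (hα1 : α < 1) {x : ℝ} (hx0 : 0 < x) (hx1 : x ≤ 1) :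
    0 < 1 - (1 - x) ^ α := by
  have := denom_lb hα0 hα1.le hx0.le hx1
  nlinarith

lemma h_nonneg {α : ℝ} (hα0 : 0 < α) {x : ℝ} (hx0 : 0 ≤ x) (hx1 : x ≤ 1) :
    0 ≤ 1 / (1 - (1 - x) ^ α) := by
  apply div_nonneg zero_le_one
  have : (1 - x) ^ α ≤ 1 := Real.rpow_le_one (by linarith) (by linarith) hα0.le
  linarith

lemma h_le {α : ℝ} (hα0 : 0 < α) (hα1 : α < 1) {x : ℝ} (hx0 : 0 < x) (hx1 : x ≤ 1) :
    1 / (1 - (1 - x) ^ α) ≤ 1 / (α * x) := by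
  apply one_div_le_one_div_of_le (by positivity)
  exact denom_lb hα0 hα1.le hx0.le hx1

lemma integrand_contOn {α : ℝ} (hα0 : 0 < α) (hα1 : α < 1) {r : ℝ} (hr : r < 1) :
    ContinuousOn (fun x => (1 / (1 - (1 - x) ^ α)) * (1 / (1 - r * x) ^ α - 1))
      (Set.Ioc (0:ℝ) 1) := by
  have hc1 : Continuous (fun x : ℝ => (1 - x) ^ α) :=
    (Real.continuous_rpow_const hα0.le).comp (continuous_const.sub continuous_id)
  have hc2 : Continuous (fun x : ℝ => (1 - r * x) ^ α) :=
    (Real.continuous_rpow_const hα0.le).comp (continuous_const.sub (continuous_const.mul continuous_id))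
  apply ContinuousOn.mul
  · apply ContinuousOn.div continuousOn_const
      (continuousOn_const.sub hc1.continuousOn)
    intro x hx
    exact (denom_pos hα0 hα1 hx.1 hx.2).ne'
  · apply ContinuousOn.sub _ continuousOn_const
    apply ContinuousOn.div continuousOn_const hc2.continuousOn
    intro x hx
    have hrx : r * x < 1 := by
      rcases le_or_gt r 0 with h | h
      · nlinarith [hx.1, hx.2]
      · nlinarith [hx.1, hx.2]
    exact (Real.rpow_pos_of_pos (by linarith) α).ne'

lemma integrableOn_of_bounded' {f : ℝ → ℝ} (hc : ContinuousOn f (Set.Ioc 0 1)) {C : ℝ}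
    (hb : ∀ x ∈ Set.Ioc (0:ℝ) 1, ‖f x‖ ≤ C) :
    IntegrableOn f (Set.Ioc (0:ℝ) 1) volume := by
  have hm : AEStronglyMeasurable f (volume.restrict (Set.Ioc (0:ℝ) 1)) :=
    hc.aestronglyMeasurable measurableSet_Ioc
  apply Integrable.mono' (g := fun _ => C)
    (integrableOn_const measure_Ioc_lt_top.ne) hm
  filter_upwards [ae_restrict_mem measurableSet_Ioc] with x hx
  exact hb x hx

lemma integrand_nonneg {α : ℝ} (hα0 : 0 < α) {r : ℝ} (hr0 : 0 ≤ r) (hr1 : r < 1)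
    {x : ℝ} (hx0 : 0 ≤ x) (hx1 : x ≤ 1) :
    0 ≤ (1 / (1 - (1 - x) ^ α)) * (1 / (1 - r * x) ^ α - 1) := by
  have hrx0 : 0 ≤ r * x := by positivity
  have hrx1 : r * x < 1 := by nlinarith
  apply mul_nonneg (h_nonneg hα0 hx0 hx1)
  have h1 : (1 - r * x) ^ α ≤ 1 := Real.rpow_le_one (by linarith) (by linarith) hα0.le
  have h2 : 0 < (1 - r * x) ^ α := Real.rpow_pos_of_pos (by linarith) α
  have : (1:ℝ) ≤ 1 / (1 - r * x) ^ α := by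
    rw [le_div_iff₀ h2]
    linarith
  linarith

lemma integrand_ub {α : ℝ} (hα0 : 0 < α) (hα1 : α < 1) {r : ℝ} (hr0 : 0 ≤ r) (hr1 : r < 1)
    {x : ℝ} (hx0 : 0 < x) (hx1 : x ≤ 1) :
    (1 / (1 - (1 - x) ^ α)) * (1 / (1 - r * x) ^ α - 1) ≤ r / (α * (1 - r)) := by
  have hrx0 : 0 ≤ r * x := by positivity
  have hrx1 : 1 - r ≤ 1 - r * x := by nlinarith
  have hA0 : 0 < 1 - r * x := by linarith
  have hApow : 0 < (1 - r * x) ^ α := Real.rpow_pos_of_pos hA0 α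
  -- second factor bound
  have hpow : (1 - r * x) ^ (1:ℝ) ≤ (1 - r * x) ^ α :=
    Real.rpow_le_rpow_of_exponent_ge hA0 (by nlinarith) hα1.le
  rw [Real.rpow_one] at hpow
  have hB : 1 / (1 - r * x) ^ α - 1 ≤ r * x / (1 - r) := by
    have h1 : 1 / (1 - r * x) ^ α ≤ 1 / (1 - r * x) := one_div_le_one_div_of_le hA0 hpow
    have h2 : 1 / (1 - r * x) - 1 = r * x / (1 - r * x) := by field_simp; ring
    have h3 : r * x / (1 - r * x) ≤ r * x / (1 - r) := by
      apply div_le_div_of_nonneg_left hrx0 (by linarith) hrx1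
    linarith
  have hBnn : 0 ≤ 1 / (1 - r * x) ^ α - 1 := by
    have h1 : (1 - r * x) ^ α ≤ 1 := Real.rpow_le_one (by linarith) (by nlinarith) hα0.le
    have : (1:ℝ) ≤ 1 / (1 - r * x) ^ α := by
      rw [le_div_iff₀ hApow]
      linarith
    linarith
  calc (1 / (1 - (1 - x) ^ α)) * (1 / (1 - r * x) ^ α - 1)
      ≤ (1 / (α * x)) * (r * x / (1 - r)) := by
        apply mul_le_mul (h_le hα0 hα1 hx0 hx1) hB hBnn (by positivity)
    _ = x * r / (x * (α * (1 - r))) := by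
        rw [div_mul_div_comm, one_mul]
        ring_nf
    _ = r / (α * (1 - r)) := mul_div_mul_left r _ hx0.ne'

lemma part1 {α : ℝ} (hα0 : 0 < α) (hα1 : α < 1) {r : ℝ} (hr0 : 0 ≤ r) (hr1 : r < 1) :
    IntervalIntegrable
      (fun x => (1 / (1 - (1 - x) ^ α)) * (1 / (1 - r * x) ^ α - 1)) volume 0 1 := by
  rw [intervalIntegrable_iff_integrableOn_Ioc_of_le zero_le_one]
  apply integrableOn_of_bounded' (integrand_contOn hα0 hα1 hr1) (C := r / (α * (1 - r)))
  intro x hx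
  rw [Real.norm_eq_abs, abs_of_nonneg (integrand_nonneg hα0 hr0 hr1 hx.1.le hx.2)]
  exact integrand_ub hα0 hα1 hr0 hr1 hx.1 hx.2

lemma rpow_integral_eq {α : ℝ} (hα0 : 0 < α) (hα1 : α < 1) :
    (∫ x in (0:ℝ)..1, (1 - x) ^ (-α)) = 1 / (1 - α) := by
  have h := intervalIntegral.integral_comp_sub_left (a := (0:ℝ)) (b := 1)
    (fun u : ℝ => u ^ (-α)) 1
  simp only [sub_zero, sub_self] at h
  rw [h, integral_rpow (Or.inl (by linarith))]
  rw [Real.one_rpow, Real.zero_rpow (by linarith)]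
  rw [show -α + 1 = 1 - α by ring]
  ring

lemma rpow_intervalIntegrable {α : ℝ} (hα0 : 0 < α) (hα1 : α < 1) :
    IntervalIntegrable (fun x : ℝ => (1 - x) ^ (-α)) volume 0 1 := by
  have h := (intervalIntegral.intervalIntegrable_rpow'
    (r := -α) (by linarith)).comp_sub_left (a := (0:ℝ)) (b := 1) 1
  have h2 : IntervalIntegrable (fun x : ℝ => (1 - x) ^ (-α)) volume 1 0 := by simpa using h
  exact h2.symm

lemma part4 {α : ℝ} (hα0 : 0 < α) (hα1 : α < 1) {r : ℝ} (hr0 : 0 ≤ r) (hr1 : r < 1) :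
    (1 - α) * r *
      (∫ x in (0:ℝ)..1, (1 / (1 - (1 - x) ^ α)) * (1 / (1 - r * x) ^ α - 1)) ≤ 1 := by
  have hmono : ∀ x ∈ Set.Ioo (0:ℝ) 1,
      (1 / (1 - (1 - x) ^ α)) * (1 / (1 - r * x) ^ α - 1) ≤ (1 - x) ^ (-α) := by
    intro x hx
    have hx0 := hx.1
    have hx1 := hx.2
    have h1x : 0 < 1 - x := by linarith
    have hA0 : 0 < 1 - r * x := by nlinarith
    have hle : 1 - x ≤ 1 - r * x := by nlinarith
    have hpow : (1 - x) ^ α ≤ (1 - r * x) ^ α := Real.rpow_le_rpow h1x.le hle hα0.le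
    have hwpos : 0 < (1 - x) ^ α := Real.rpow_pos_of_pos h1x α
    have hApos : 0 < (1 - r * x) ^ α := Real.rpow_pos_of_pos hA0 α
    have hstep : 1 / (1 - r * x) ^ α - 1 ≤ 1 / (1 - x) ^ α - 1 := by
      have := one_div_le_one_div_of_le hwpos hpow
      linarith
    have hd := denom_pos hα0 hα1 hx0 hx1.le
    calc (1 / (1 - (1 - x) ^ α)) * (1 / (1 - r * x) ^ α - 1)
        ≤ (1 / (1 - (1 - x) ^ α)) * (1 / (1 - x) ^ α - 1) :=
          mul_le_mul_of_nonneg_left hstep (h_nonneg hα0 hx0.le hx1.le)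
      _ = (1 - x) ^ (-α) := by
          rw [Real.rpow_neg h1x.le]
          have hw1 : (1 - x) ^ α < 1 := by nlinarith [denom_lb hα0 hα1.le hx0.le hx1.le]
          field_simp
    -- done
  have hint1 := part1 hα0 hα1 hr0 hr1
  have hint2 := rpow_intervalIntegrable hα0 hα1
  have hIoc1 := (intervalIntegrable_iff_integrableOn_Ioc_of_le zero_le_one).mp hint1
  have hIoc2 := (intervalIntegrable_iff_integrableOn_Ioc_of_le zero_le_one).mp hint2
  have hIle : (∫ x in (0:ℝ)..1, (1 / (1 - (1 - x) ^ α)) * (1 / (1 - r * x) ^ α - 1))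
      ≤ ∫ x in (0:ℝ)..1, (1 - x) ^ (-α) := by
    rw [intervalIntegral.integral_of_le zero_le_one, intervalIntegral.integral_of_le zero_le_one,
      integral_Ioc_eq_integral_Ioo, integral_Ioc_eq_integral_Ioo]
    apply setIntegral_mono_on
      (hIoc1.mono_set Set.Ioo_subset_Ioc_self)
      (hIoc2.mono_set Set.Ioo_subset_Ioc_self)
      measurableSet_Ioo hmono
  rw [rpow_integral_eq hα0 hα1] at hIle
  have hfac : 0 ≤ (1 - α) * r := by nlinarith
  calc (1 - α) * r * (∫ x in (0:ℝ)..1, (1 / (1 - (1 - x) ^ α)) * (1 / (1 - r * x) ^ α - 1))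
      ≤ (1 - α) * r * (1 / (1 - α)) := mul_le_mul_of_nonneg_left hIle hfac
    _ = r := by
        rw [mul_one_div]
        rw [mul_comm (1 - α) r, mul_div_assoc, div_self (by linarith), mul_one]
    _ ≤ 1 := hr1.le

noncomputable def aInt (α : ℝ) (k : ℕ) : ℝ :=
  ∫ x in Set.Ioc (0:ℝ) 1, x ^ k * (1 / (1 - (1 - x) ^ α))

lemma aInt_nonneg {α : ℝ} (hα0 : 0 < α) (k : ℕ) : 0 ≤ aInt α k := by
  apply setIntegral_nonneg measurableSet_Ioc
  intro x hx
  exact mul_nonneg (pow_nonneg hx.1.le k) (h_nonneg hα0 hx.1.le hx.2)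

lemma xk_h_bound {α : ℝ} (hα0 : 0 < α) (hα1 : α < 1) (m : ℕ) {x : ℝ}
    (hx : x ∈ Set.Ioc (0:ℝ) 1) : ‖x ^ (m+1) * (1 / (1 - (1 - x) ^ α))‖ ≤ 1 / α := by
  have hx0 := hx.1
  have hx1 := hx.2
  have hnn : 0 ≤ x ^ (m+1) * (1 / (1 - (1 - x) ^ α)) :=
    mul_nonneg (by positivity) (h_nonneg hα0 hx0.le hx1)
  rw [Real.norm_eq_abs, abs_of_nonneg hnn]
  have hh := h_le hα0 hα1 hx0 hx1
  calc x ^ (m+1) * (1 / (1 - (1 - x) ^ α))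
      ≤ x ^ (m+1) * (1 / (α * x)) :=
        mul_le_mul_of_nonneg_left hh (by positivity)
    _ = x ^ m * (x * (1 / (α * x))) := by ring
    _ = x ^ m * (1 / α) := by
        congr 1
        rw [mul_one_div, mul_comm α x, ← div_div, div_self hx0.ne']
    _ ≤ 1 * (1 / α) := by
        apply mul_le_mul_of_nonneg_right (pow_le_one₀ hx0.le hx1) (by positivity)
    _ = 1 / α := one_mul _

lemma xk_h_integrableOn {α : ℝ} (hα0 : 0 < α) (hα1 : α < 1) (m : ℕ) :
    IntegrableOn (fun x => x ^ (m+1) * (1 / (1 - (1 - x) ^ α))) (Set.Ioc (0:ℝ) 1) volume := by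
  apply integrableOn_of_bounded' (C := 1/α)
  · apply ContinuousOn.mul (continuous_pow (m+1)).continuousOn
    have hc1 : Continuous (fun x : ℝ => (1 - x) ^ α) :=
      (Real.continuous_rpow_const hα0.le).comp (continuous_const.sub continuous_id)
    apply ContinuousOn.div continuousOn_const (continuousOn_const.sub hc1.continuousOn)
    intro x hx
    exact (denom_pos hα0 hα1 hx.1 hx.2).ne'
  · exact fun x hx => xk_h_bound hα0 hα1 m hx

lemma aInt_le {α : ℝ} (hα0 : 0 < α) (hα1 : α < 1) (m : ℕ) : aInt α (m+1) ≤ 1 / α := by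
  have h1 : aInt α (m+1) ≤ ∫ _ in Set.Ioc (0:ℝ) 1, (1/α : ℝ) := by
    apply setIntegral_mono_on (xk_h_integrableOn hα0 hα1 m)
      (integrableOn_const measure_Ioc_lt_top.ne) measurableSet_Ioc
    intro x hx
    have := xk_h_bound hα0 hα1 m hx
    rw [Real.norm_eq_abs] at this
    exact (le_abs_self _).trans this
  rw [setIntegral_const] at h1
  simpa using h1

lemma pointwise_sum {α : ℝ} (hα0 : 0 < α) {r x : ℝ} (hr : |r| < 1)
    (hx : x ∈ Set.Ioc (0:ℝ) 1) :
    (1 / (1 - (1 - x) ^ α)) * (1 / (1 - r * x) ^ α - 1)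
      = ∑' m : ℕ, (binc α (m+1) * r ^ (m+1)) * (x ^ (m+1) * (1 / (1 - (1 - x) ^ α))) := by
  have hx0 := hx.1
  have hx1 := hx.2
  have hu : |r * x| < 1 := by
    rw [abs_mul]
    calc |r| * |x| ≤ |r| * 1 := by
          apply mul_le_mul_of_nonneg_left _ (abs_nonneg r)
          rw [abs_of_nonneg hx0.le]
          exact hx1
      _ < 1 := by simpa using hr
  have hA0 : 0 < 1 - r * x := by
    have := (abs_lt.mp hu).2
    linarith
  have hb := binom_tsum hα0 hu
  have hsum := summable_binc' hα0.le hu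
  have htail : (1 - r * x) ^ (-α) - 1 = ∑' m : ℕ, binc α (m+1) * (r * x) ^ (m+1) := by
    rw [← hb, Summable.tsum_eq_zero_add hsum]
    simp [binc_zero]
  have hinv : 1 / (1 - r * x) ^ α - 1 = (1 - r * x) ^ (-α) - 1 := by
    rw [Real.rpow_neg hA0.le, one_div]
  rw [hinv, htail, ← tsum_mul_left]
  apply tsum_congr
  intro m
  rw [mul_pow]
  ring

lemma integral_step {α : ℝ} (hα0 : 0 < α) (hα1 : α < 1) {r : ℝ} (hr : |r| < 1) :
    (∫ x in (0:ℝ)..1, (1 / (1 - (1 - x) ^ α)) * (1 / (1 - r * x) ^ α - 1))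
      = ∑' m : ℕ, (binc α (m+1) * aInt α (m+1)) * r ^ (m+1) := by
  have hmaj : Summable (fun m : ℕ => binc α (m+1) * |r| ^ (m+1) * (1/α)) := by
    apply Summable.mul_right
    exact (summable_nat_add_iff (f := fun n => binc α n * |r| ^ n) 1).mpr (summable_binc' hα0.le (by rwa [abs_abs]))
  have hInt : ∀ m : ℕ, Integrable
      (fun x => (binc α (m+1) * r ^ (m+1)) * (x ^ (m+1) * (1 / (1 - (1 - x) ^ α))))
      (volume.restrict (Set.Ioc (0:ℝ) 1)) :=
    fun m => (xk_h_integrableOn hα0 hα1 m).const_mul _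
  have hNorm : ∀ m : ℕ,
      (∫ x in Set.Ioc (0:ℝ) 1,
        ‖(binc α (m+1) * r ^ (m+1)) * (x ^ (m+1) * (1 / (1 - (1 - x) ^ α)))‖)
      ≤ binc α (m+1) * |r| ^ (m+1) * (1/α) := by
    intro m
    have heq : ∀ x : ℝ,
        ‖(binc α (m+1) * r ^ (m+1)) * (x ^ (m+1) * (1 / (1 - (1 - x) ^ α)))‖
        = (binc α (m+1) * |r| ^ (m+1)) * ‖x ^ (m+1) * (1 / (1 - (1 - x) ^ α))‖ := by
      intro x
      rw [norm_mul, Real.norm_eq_abs (binc α (m+1) * r ^ (m+1)), abs_mul, abs_pow,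
        abs_of_nonneg (binc_nonneg hα0.le (m+1))]
    calc (∫ x in Set.Ioc (0:ℝ) 1,
          ‖(binc α (m+1) * r ^ (m+1)) * (x ^ (m+1) * (1 / (1 - (1 - x) ^ α)))‖)
        = (binc α (m+1) * |r| ^ (m+1)) *
            ∫ x in Set.Ioc (0:ℝ) 1, ‖x ^ (m+1) * (1 / (1 - (1 - x) ^ α))‖ := by
          rw [← MeasureTheory.integral_const_mul]
          exact setIntegral_congr_fun measurableSet_Ioc (fun x _ => heq x)
      _ ≤ (binc α (m+1) * |r| ^ (m+1)) * (1/α) := by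
          apply mul_le_mul_of_nonneg_left _
            (mul_nonneg (binc_nonneg hα0.le _) (by positivity))
          have h1 : (∫ x in Set.Ioc (0:ℝ) 1, ‖x ^ (m+1) * (1 / (1 - (1 - x) ^ α))‖)
              ≤ ∫ _ in Set.Ioc (0:ℝ) 1, (1/α : ℝ) := by
            apply setIntegral_mono_on ((xk_h_integrableOn hα0 hα1 m).norm)
              (integrableOn_const measure_Ioc_lt_top.ne) measurableSet_Ioc
            intro x hx
            exact xk_h_bound hα0 hα1 m hx
          rw [setIntegral_const] at h1
          simpa using h1
  have hSum : Summable (fun m : ℕ => ∫ x in Set.Ioc (0:ℝ) 1,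
      ‖(binc α (m+1) * r ^ (m+1)) * (x ^ (m+1) * (1 / (1 - (1 - x) ^ α)))‖) := by
    apply Summable.of_nonneg_of_le (fun m => integral_nonneg (fun x => norm_nonneg _))
      hNorm hmaj
  rw [intervalIntegral.integral_of_le zero_le_one]
  rw [setIntegral_congr_fun measurableSet_Ioc
    (fun x hx => pointwise_sum hα0 hr hx)]
  rw [← integral_tsum_of_summable_integral_norm hInt hSum]
  apply tsum_congr
  intro m
  rw [MeasureTheory.integral_const_mul]
  rw [show (∫ x in Set.Ioc (0:ℝ) 1, x ^ (m+1) * (1 / (1 - (1 - x) ^ α))) = aInt α (m+1) from rfl]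
  ring

lemma part3 {α : ℝ} (hα0 : 0 < α) (hα1 : α < 1) (φ : ℝ → ℝ)
    (hφ : ∀ r, φ r = (1 - α) * r *
        ∫ x in (0:ℝ)..1, (1 / (1 - (1 - x) ^ α)) * (1 / (1 - r * x) ^ α - 1)) :
    ∀ n : ℕ, 0 ≤ iteratedDeriv n φ 0 := by
  classical
  set b : ℕ → ℝ := fun k =>
    match k with
    | 0 => 0
    | 1 => 0
    | (m+2) => (1 - α) * ((binc α (m+1) * aInt α (m+1))) with hbdef
  have hb0 : b 0 = 0 := rfl
  have hb1 : b 1 = 0 := rfl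
  have hb2 : ∀ m : ℕ, b (m+2) = (1 - α) * (binc α (m+1) * aInt α (m+1)) := fun _ => rfl
  have hbnn : ∀ k, 0 ≤ b k := by
    intro k
    match k with
    | 0 => exact le_refl 0
    | 1 => exact le_refl 0
    | (m+2) =>
      rw [hb2]
      exact mul_nonneg (by linarith)
        (mul_nonneg (binc_nonneg hα0.le _) (aInt_nonneg hα0 _))
  have hbbd : ∀ m : ℕ, b (m+2) ≤ (1/α) * binc α (m+1) := by
    intro m
    rw [hb2]
    calc (1 - α) * (binc α (m+1) * aInt α (m+1))
        ≤ 1 * (binc α (m+1) * (1/α)) := by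
          apply mul_le_mul (by linarith) _ _ zero_le_one
          · exact mul_le_mul_of_nonneg_left (aInt_le hα0 hα1 m) (binc_nonneg hα0.le _)
          · exact mul_nonneg (binc_nonneg hα0.le _) (aInt_nonneg hα0 _)
      _ = (1/α) * binc α (m+1) := by ring
  -- summability of the coefficient series at radius < 1
  have hsummain : ∀ t : ℝ, 0 ≤ t → t < 1 → Summable (fun k : ℕ => b k * t ^ k) := by
    intro t ht0 ht1
    have hmaj : Summable (fun m : ℕ => (1/α) * (binc α (m+1) * t ^ (m+1))) := by
      apply Summable.mul_left
      exact (summable_nat_add_iff (f := fun n => binc α n * t ^ n) 1).mpr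
        (summable_binc hα0.le ht0 ht1)
    have hs2 : Summable (fun m : ℕ => b (m+2) * t ^ (m+2)) := by
      refine Summable.of_nonneg_of_le (g := fun m : ℕ => b (m+2) * t ^ (m+2))
        (fun m => mul_nonneg (hbnn (m+2)) (by positivity)) (fun m => ?_) hmaj
      calc b (m+2) * t ^ (m+2) ≤ ((1/α) * binc α (m+1)) * t ^ (m+2) := by
            apply mul_le_mul_of_nonneg_right (hbbd m) (by positivity)
        _ = ((1/α) * (binc α (m+1) * t ^ (m+1))) * t := by ring
        _ ≤ ((1/α) * (binc α (m+1) * t ^ (m+1))) * 1 := by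
            apply mul_le_mul_of_nonneg_left ht1.le
            apply mul_nonneg (by positivity) (mul_nonneg (binc_nonneg hα0.le _) (by positivity))
        _ = (1/α) * (binc α (m+1) * t ^ (m+1)) := mul_one _
    have hs1 : Summable (fun k : ℕ => b (k+1) * t ^ (k+1)) :=
      (summable_nat_add_iff (f := fun k => b (k+1) * t ^ (k+1)) 1).mp hs2
    exact (summable_nat_add_iff (f := fun k => b k * t ^ k) 1).mp hs1
  have hsummable : ∀ r : ℝ, |r| < 1 → Summable (fun k : ℕ => b k * r ^ k) := by
    intro r hr
    apply Summable.of_norm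
    apply (hsummain |r| (abs_nonneg r) hr).congr
    intro k
    rw [norm_mul, norm_pow, Real.norm_eq_abs, Real.norm_eq_abs, abs_of_nonneg (hbnn k)]
  -- the power series representation
  have hstep2 : ∀ r : ℝ, |r| < 1 → φ r = ∑' k : ℕ, b k * r ^ k := by
    intro r hr
    rw [hφ r, integral_step hα0 hα1 hr]
    have hs0 := hsummable r hr
    have hs1 : Summable (fun k : ℕ => b (k+1) * r ^ (k+1)) :=
      (summable_nat_add_iff (f := fun k => b k * r ^ k) 1).mpr hs0
    have hs2 : Summable (fun k : ℕ => b (k+2) * r ^ (k+2)) :=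
      (summable_nat_add_iff (f := fun k => b (k+1) * r ^ (k+1)) 1).mpr hs1
    rw [Summable.tsum_eq_zero_add hs0]
    rw [Summable.tsum_eq_zero_add hs1]
    simp only [hb0, hb1, pow_zero, mul_one, zero_mul, zero_add, mul_zero]
    rw [← tsum_mul_left]
    apply tsum_congr
    intro m
    rw [hb2 m]
    ring
  -- build the formal power series
  set p : FormalMultilinearSeries ℝ ℝ ℝ := FormalMultilinearSeries.ofScalars ℝ b with hpdef
  have hrad : ((2⁻¹ : NNReal) : ENNReal) ≤ p.radius := by
    apply FormalMultilinearSeries.le_radius_of_summable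
    have h1 : Summable (fun n : ℕ => b n * ((2⁻¹ : NNReal) : ℝ) ^ n) := by
      apply hsummain
      · norm_num
      · norm_num
    apply h1.congr
    intro n
    rw [FormalMultilinearSeries.ofScalars_norm, Real.norm_eq_abs, abs_of_nonneg (hbnn n)]
  have hpos : (0 : ENNReal) < p.radius := lt_of_lt_of_le (by norm_num) hrad
  have hball := p.hasFPowerSeriesOnBall hpos
  have hAt : HasFPowerSeriesAt p.sum p 0 := hball.hasFPowerSeriesAt
  have heq : p.sum =ᶠ[nhds (0:ℝ)] φ := by
    filter_upwards [Ioo_mem_nhds (show (-2⁻¹ : ℝ) < 0 by norm_num)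
      (show (0:ℝ) < 2⁻¹ by norm_num)] with r hrmem
    have hr : |r| < 1 := by
      rw [abs_lt]
      constructor
      · linarith [hrmem.1]
      · linarith [hrmem.2]
    rw [hstep2 r hr]
    rw [show p.sum r = FormalMultilinearSeries.ofScalarsSum b r from rfl,
      FormalMultilinearSeries.ofScalars_sum_eq]
    apply tsum_congr
    intro n
    rw [smul_eq_mul]
  have hφAt : HasFPowerSeriesAt φ p 0 := hAt.congr heq
  obtain ⟨R, hRball⟩ := hφAt
  intro n
  have hfs := hRball.factorial_smul (1:ℝ) n
  rw [iteratedDeriv_eq_iteratedFDeriv, ← hfs]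
  rw [show p n = FormalMultilinearSeries.ofScalars ℝ b n from rfl]
  rw [FormalMultilinearSeries.ofScalars_apply_eq]
  rw [one_pow, smul_eq_mul, mul_one, nsmul_eq_mul]
  exact mul_nonneg (by positivity) (hbnn n)

theorem stmt_15 (α : ℝ) (hα : α ∈ Set.Ioo (0:ℝ) 1)
    (φ : ℝ → ℝ)
    (hφ : ∀ r, φ r = (1 - α) * r *
        ∫ x in (0:ℝ)..1, (1 / (1 - (1 - x) ^ α)) * (1 / (1 - r * x) ^ α - 1)) :
    (∀ r ∈ Set.Ico (0:ℝ) 1,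
        IntervalIntegrable
          (fun x => (1 / (1 - (1 - x) ^ α)) * (1 / (1 - r * x) ^ α - 1))
          volume 0 1)
      ∧ φ 0 = 0
      ∧ (∀ n : ℕ, 0 ≤ iteratedDeriv n φ 0)
      ∧ ∀ r ∈ Set.Ico (0:ℝ) 1, φ r ≤ 1 := by
  obtain ⟨hα0, hα1⟩ := hα
  refine ⟨fun r hr => part1 hα0 hα1 hr.1 hr.2, ?_, part3 hα0 hα1 φ hφ, fun r hr => ?_⟩
  · rw [hφ 0]
    ring
  · rw [hφ r]
    exact part4 hα0 hα1 hr.1 hr.2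
end

section
/- For n ∈ ℕ*, one has -(1/n)∫₀¹ x^n/log(1-x) dx = (1/n)∫₀^∞ (1-e^{-v})^n e^{-v} dv/v = (1/n) Σ_{k=1}^n C(n,k) (-1)^{k+1} log(k+1). -/
open Real MeasureTheory

section Aux

open Set

private lemma inner_eval' (b v : ℝ) (hb : 1 ≤ b) (hv : 0 < v) :
    ∫ t in Ioc (1:ℝ) b, exp (-(t * v)) = (exp (-v) - exp (-(b * v))) / v := by
  rw [← intervalIntegral.integral_of_le hb]
  have h1 : ∀ t : ℝ, exp (-(t * v)) = (fun u : ℝ => exp u) (-v * t) := by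
    intro t; simp only; ring_nf
  simp only [h1]
  rw [intervalIntegral.integral_comp_mul_left (fun u : ℝ => exp u) (neg_ne_zero.mpr hv.ne'),
    integral_exp, smul_eq_mul]
  have e1 : -v * b = -(b * v) := by ring
  have e2 : -v * 1 = -v := by ring
  rw [e1, e2, inv_neg, div_eq_mul_inv]
  ring

private lemma inner_eval2' (t : ℝ) (ht : 1 ≤ t) :
    ∫ v in Ioi (0:ℝ), exp (-(t * v)) = 1 / t := by
  have ht0 : 0 < t := by linarith
  calc ∫ v in Ioi (0:ℝ), exp (-(t * v))
      = ∫ v in Ioi (0:ℝ), (fun u : ℝ => exp (-u)) (t * v) := rfl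
    _ = t⁻¹ • ∫ u in Ioi (t * 0), exp (-u) :=
        MeasureTheory.integral_comp_mul_left_Ioi (fun u : ℝ => exp (-u)) 0 ht0
    _ = 1 / t := by rw [mul_zero, integral_exp_neg_Ioi]; simp [smul_eq_mul]

private lemma frullani_lintegral' (b : ℝ) (hb : 1 ≤ b) :
    ∫⁻ v in Ioi (0:ℝ), ENNReal.ofReal ((exp (-v) - exp (-(b * v))) / v)
      = ENNReal.ofReal (Real.log b) := by
  have key : ∫⁻ v in Ioi (0:ℝ), ENNReal.ofReal ((exp (-v) - exp (-(b * v))) / v)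
      = ∫⁻ v in Ioi (0:ℝ), ∫⁻ t in Ioc (1:ℝ) b, ENNReal.ofReal (exp (-(t * v))) := by
    refine setLIntegral_congr_fun measurableSet_Ioi ?_
    intro v hv; dsimp only
    rw [← inner_eval' b v hb hv, ← ofReal_integral_eq_lintegral_ofReal]
    · exact ((Real.continuous_exp.comp (by continuity)).integrableOn_Ioc)
    · exact ae_of_all _ fun t => (exp_pos _).le
  rw [key, lintegral_lintegral_swap]
  · have heq : ∀ t ∈ Ioc (1:ℝ) b, ∫⁻ v in Ioi (0:ℝ), ENNReal.ofReal (exp (-(t * v)))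
        = ENNReal.ofReal (1 / t) := by
      intro t ht
      rw [← inner_eval2' t ht.1.le, ← ofReal_integral_eq_lintegral_ofReal]
      · have : IntegrableOn (fun v => exp (-t * v)) (Ioi (0:ℝ)) :=
          exp_neg_integrableOn_Ioi 0 (by linarith [ht.1])
        simp only [neg_mul] at this; exact this
      · exact ae_of_all _ fun v => (exp_pos _).le
    rw [setLIntegral_congr_fun measurableSet_Ioc heq,
      ← ofReal_integral_eq_lintegral_ofReal]
    · rw [← intervalIntegral.integral_of_le hb,
        integral_one_div (by intro h; rw [Set.uIcc_of_le hb] at h; linarith [h.1])]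
      norm_num
    · have hc : ContinuousOn (fun t : ℝ => 1 / t) (Icc (1:ℝ) b) := by
        apply ContinuousOn.div continuousOn_const continuousOn_id
        intro x hx h
        rcases hx with ⟨hx1, _⟩
        simp only [id] at h
        linarith
      exact (hc.integrableOn_compact isCompact_Icc).mono_set Ioc_subset_Icc_self
    · refine (ae_restrict_iff' measurableSet_Ioc).mpr (ae_of_all _ ?_)
      intro t ht
      have : (0:ℝ) < t := by linarith [ht.1]
      positivity
  · apply Measurable.aemeasurable
    apply Measurable.ennreal_ofReal
    exact ((measurable_snd.mul measurable_fst).neg).exp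

private lemma frullani_nonneg' (b : ℝ) (hb : 1 ≤ b) :
    ∀ v ∈ Ioi (0:ℝ), 0 ≤ (exp (-v) - exp (-(b * v))) / v := by
  intro v hv
  have hv' : (0:ℝ) < v := hv
  have h : exp (-(b * v)) ≤ exp (-v) := exp_le_exp.mpr (by nlinarith)
  apply div_nonneg (by linarith) hv'.le

private lemma frullani_meas' (b : ℝ) :
    Measurable (fun v : ℝ => (exp (-v) - exp (-(b * v))) / v) := by
  apply Measurable.div
  · exact (measurable_id.neg.exp).sub ((measurable_const.mul measurable_id).neg.exp)
  · exact measurable_id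

private lemma frullani_integrable' (b : ℝ) (hb : 1 ≤ b) :
    IntegrableOn (fun v : ℝ => (exp (-v) - exp (-(b * v))) / v) (Ioi 0) := by
  have hnn : 0 ≤ᵐ[volume.restrict (Ioi (0:ℝ))]
      fun v => (exp (-v) - exp (-(b * v))) / v :=
    (ae_restrict_iff' measurableSet_Ioi).mpr (ae_of_all _ (frullani_nonneg' b hb))
  refine ⟨(frullani_meas' b).aestronglyMeasurable, ?_⟩
  rw [hasFiniteIntegral_iff_norm]
  have : ∫⁻ v in Ioi (0:ℝ), ENNReal.ofReal ‖(exp (-v) - exp (-(b * v))) / v‖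
      = ∫⁻ v in Ioi (0:ℝ), ENNReal.ofReal ((exp (-v) - exp (-(b * v))) / v) := by
    apply lintegral_congr_ae
    filter_upwards [hnn] with v hv
    rw [Real.norm_eq_abs, abs_of_nonneg hv]
  rw [this, frullani_lintegral' b hb]
  exact ENNReal.ofReal_lt_top

private lemma frullani' (b : ℝ) (hb : 1 ≤ b) :
    ∫ v in Ioi (0:ℝ), (exp (-v) - exp (-(b * v))) / v = Real.log b := by
  have hnn : 0 ≤ᵐ[volume.restrict (Ioi (0:ℝ))]
      fun v => (exp (-v) - exp (-(b * v))) / v :=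
    (ae_restrict_iff' measurableSet_Ioi).mpr (ae_of_all _ (frullani_nonneg' b hb))
  rw [integral_eq_lintegral_of_nonneg_ae hnn (frullani_meas' b).aestronglyMeasurable,
    frullani_lintegral' b hb, ENNReal.toReal_ofReal (Real.log_nonneg hb)]

private lemma keyid' (n : ℕ) (hn : 1 ≤ n) (y : ℝ) :
    (1 - y) ^ n * y
      = ∑ k ∈ Finset.range (n+1), (n.choose k : ℝ) * (-1)^(k+1) * (y - y^(k+1)) := by
  have h0 : ∑ k ∈ Finset.range (n+1), (-1:ℝ)^k * 1^(n-k) * (n.choose k) = 0 := by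
    have h := add_pow (-1:ℝ) 1 n
    rw [show (-1:ℝ)+1 = 0 by ring, zero_pow (by omega : n ≠ 0)] at h
    exact h.symm
  have h2 : ∑ k ∈ Finset.range (n+1), (-y)^k * 1^(n-k) * (n.choose k) = (1 - y)^n := by
    rw [← add_pow]; ring_nf
  have hterm : ∀ k ∈ Finset.range (n+1),
      (n.choose k : ℝ) * (-1)^(k+1) * (y - y^(k+1))
        = (-((-1:ℝ)^k * 1^(n-k) * (n.choose k))) * y
          + ((-y)^k * 1^(n-k) * (n.choose k)) * y := by
    intro k _
    rw [neg_pow y k, pow_succ (-1:ℝ) k, pow_succ y k]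
    ring
  rw [Finset.sum_congr rfl hterm, Finset.sum_add_distrib, ← Finset.sum_mul, ← Finset.sum_mul,
    Finset.sum_neg_distrib, h0, h2]
  ring

end Aux

theorem stmt_16 (n : ℕ) (hn : 1 ≤ n) :
    (-(1 / (n : ℝ)) * ∫ x in (0:ℝ)..1, x ^ n / Real.log (1 - x)
        = (1 / (n : ℝ)) * ∫ v in Set.Ioi (0:ℝ), (1 - Real.exp (-v)) ^ n * Real.exp (-v) / v)
      ∧ (1 / (n : ℝ)) * ∫ v in Set.Ioi (0:ℝ), (1 - Real.exp (-v)) ^ n * Real.exp (-v) / v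
        = (1 / (n : ℝ)) * ∑ k ∈ Finset.Icc 1 n,
            (n.choose k : ℝ) * (-1) ^ (k + 1) * Real.log ((k : ℝ) + 1) := by
  open Set in
  constructor
  · -- Part 1: change of variables x = 1 - e^{-v}
    have himg : (fun v : ℝ => 1 - exp (-v)) '' Ioi 0 = Ioo 0 1 := by
      ext x
      constructor
      · rintro ⟨v, hv, rfl⟩
        have h1 : exp (-v) < 1 := exp_lt_one_iff.mpr (by simpa using hv)
        have h2 : 0 < exp (-v) := exp_pos _
        exact ⟨by dsimp only; linarith, by dsimp only; linarith⟩
      · rintro ⟨h1, h2⟩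
        refine ⟨-Real.log (1 - x), ?_, ?_⟩
        · have : Real.log (1 - x) < 0 := Real.log_neg (by linarith) (by linarith)
          simpa using this
        · dsimp only; rw [neg_neg, Real.exp_log (by linarith)]; ring
    have hderiv : ∀ v ∈ Ioi (0:ℝ),
        HasDerivWithinAt (fun v : ℝ => 1 - exp (-v)) (exp (-v)) (Ioi 0) v := by
      intro v _
      have h := ((hasDerivAt_neg v).exp).const_sub 1
      simpa using h.hasDerivWithinAt
    have hinj : InjOn (fun v : ℝ => 1 - exp (-v)) (Ioi 0) := by
      intro a _ b _ h
      simp only [sub_right_inj] at h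
      have := Real.exp_injective h
      linarith
    have hsub := integral_image_eq_integral_abs_deriv_smul measurableSet_Ioi hderiv hinj
        (fun x => x ^ n / Real.log (1 - x))
    rw [himg] at hsub
    have h01 : (0:ℝ) ≤ 1 := by norm_num
    rw [intervalIntegral.integral_of_le h01, integral_Ioc_eq_integral_Ioo, hsub]
    have : ∀ v : ℝ, |exp (-v)| • ((1 - exp (-v)) ^ n / Real.log (1 - (1 - exp (-v))))
        = -((1 - exp (-v)) ^ n * exp (-v) / v) := by
      intro v
      have : Real.log (1 - (1 - exp (-v))) = -v := by
        rw [show (1 : ℝ) - (1 - exp (-v)) = exp (-v) by ring, Real.log_exp]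
      rw [this, abs_exp, smul_eq_mul]
      ring
    simp only [this]
    rw [integral_neg]
    ring
  · -- Part 2: binomial expansion + Frullani integrals
    have hfun : ∀ v : ℝ, (1 - exp (-v)) ^ n * exp (-v) / v
        = ∑ k ∈ Finset.range (n+1),
            (n.choose k : ℝ) * (-1)^(k+1) * ((exp (-v) - exp (-(((k:ℝ)+1) * v))) / v) := by
      intro v
      have hy : ∀ k : ℕ, exp (-(((k:ℝ)+1) * v)) = exp (-v) ^ (k+1) := by
        intro k
        rw [← Real.exp_nat_mul]
        push_cast
        ring_nf
      have := keyid' n hn (exp (-v))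
      calc (1 - exp (-v)) ^ n * exp (-v) / v
          = (∑ k ∈ Finset.range (n+1),
              (n.choose k : ℝ) * (-1)^(k+1) * (exp (-v) - exp (-v)^(k+1))) / v := by rw [← this]
        _ = ∑ k ∈ Finset.range (n+1),
              (n.choose k : ℝ) * (-1)^(k+1) * ((exp (-v) - exp (-(((k:ℝ)+1) * v))) / v) := by
            rw [Finset.sum_div]
            refine Finset.sum_congr rfl fun k _ => ?_
            rw [hy k, mul_div_assoc]
    have hint : ∫ v in Ioi (0:ℝ), (1 - exp (-v)) ^ n * exp (-v) / v
        = ∑ k ∈ Finset.range (n+1),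
            (n.choose k : ℝ) * (-1)^(k+1) * Real.log ((k:ℝ)+1) := by
      rw [funext hfun |> congrArg (fun f => ∫ v in Ioi (0:ℝ), f v)]
      rw [integral_finset_sum]
      · refine Finset.sum_congr rfl fun k _ => ?_
        rw [integral_const_mul,
          frullani' ((k:ℝ)+1) (by push_cast; linarith [Nat.cast_nonneg (α := ℝ) k])]
      · intro k _
        exact ((frullani_integrable' ((k:ℝ)+1)
          (by push_cast; linarith [Nat.cast_nonneg (α := ℝ) k])).const_mul _)
    rw [hint]
    congr 1
    rw [Finset.sum_range_succ']
    have h00 : (n.choose 0 : ℝ) * (-1)^(0+1) * Real.log (((0:ℕ):ℝ)+1) = 0 := by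
      norm_num
    rw [h00, add_zero, ← Finset.Ico_add_one_right_eq_Icc, Finset.sum_Ico_eq_sum_range]
    simp only [Nat.add_sub_cancel]
    refine Finset.sum_congr rfl fun k _ => ?_
    rw [add_comm 1 k]
end

section
/- Let α ∈ (0,1), θ ≥ 0, and g_θ(r) = r + α((1-r+θ)^(1/α) - θ^(1/α))/(1+θ)^((1/α)-1). Define h_θ(r) = (1+θ)·[1 - (1 - r(1 - (θ/(1+θ))^(1/α)))^α]. Then g_θ(h_θ(r)) - h_θ(r) = g_θ(0)(1-r) for all r ∈ [0,1]. -/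
open Real

theorem stmt_19 (α : ℝ) (hα : α ∈ Set.Ioo (0:ℝ) 1) (θ : ℝ) (hθ : 0 ≤ θ)
    (gθ hθfun : ℝ → ℝ)
    (hg : ∀ r, gθ r = r + α * ((1 - r + θ) ^ (1 / α) - θ ^ (1 / α)) / (1 + θ) ^ (1 / α - 1))
    (hh : ∀ r, hθfun r = (1 + θ) * (1 - (1 - r * (1 - (θ / (1 + θ)) ^ (1 / α))) ^ α)) :
    ∀ r ∈ Set.Icc (0:ℝ) 1, gθ (hθfun r) - hθfun r = gθ 0 * (1 - r) := by
  obtain ⟨hα0, hα1⟩ := hα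
  intro r hr
  obtain ⟨hr0, hr1⟩ := hr
  have h1θ : (0:ℝ) < 1 + θ := by linarith
  have hc0 : (0:ℝ) ≤ (θ / (1 + θ)) ^ (1 / α) := Real.rpow_nonneg (by positivity) _
  have hc1 : (θ / (1 + θ)) ^ (1 / α) ≤ 1 :=
    Real.rpow_le_one (by positivity) (by rw [div_le_one h1θ]; linarith) (by positivity)
  have hcid : (θ / (1 + θ)) ^ (1 / α) * (1 + θ) ^ (1 / α) = θ ^ (1 / α) := by
    rw [Real.div_rpow hθ h1θ.le, div_mul_cancel₀]
    exact (Real.rpow_pos_of_pos h1θ _).ne'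
  set c := (θ / (1 + θ)) ^ (1 / α) with hcdef
  have hu0 : (0:ℝ) ≤ 1 - r * (1 - c) := by nlinarith
  have key : 1 - hθfun r + θ = (1 + θ) * (1 - r * (1 - c)) ^ α := by
    rw [hh]; ring
  have hpow : (1 - hθfun r + θ) ^ (1 / α) = (1 + θ) ^ (1 / α) * (1 - r * (1 - c)) := by
    rw [key, Real.mul_rpow h1θ.le (Real.rpow_nonneg hu0 _), ← Real.rpow_mul hu0,
      mul_one_div_cancel hα0.ne', Real.rpow_one]
  have hD : (0:ℝ) < (1 + θ) ^ (1 / α - 1) := Real.rpow_pos_of_pos h1θ _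
  have main : α * ((1 + θ) ^ (1 / α) * (1 - r * (1 - c)) - θ ^ (1 / α)) / (1 + θ) ^ (1 / α - 1)
      = α * ((1 + θ) ^ (1 / α) - θ ^ (1 / α)) / (1 + θ) ^ (1 / α - 1) * (1 - r) := by
    rw [div_mul_eq_mul_div]
    congr 1
    linear_combination (α * r) * hcid
  have e0 : (1:ℝ) - 0 + θ = 1 + θ := by ring
  rw [hg, hg, hpow, e0]
  linear_combination main
end
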